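/- arXiv:2409.00534 — 6 statements merged into one kernel-verified Lean document; each statement's English description precedes it below -/
import Mathlib

section
/- Every r-graph is matching covered: it is connected, has order at least two, and every edge lies in some perfect matching. -/
/-- The underlying simple graph of a multigraph given by `ends`. -/
def toSimple {V E : Type} (ends : E → Sym2 V) : SimpleGraph V where
  Adj u w := u ≠ w ∧ ∃ e, ends e = s(u, w)
  symm := by
    constructor
    rintro u w ⟨hne, e, he⟩
    exact ⟨hne.symm, e, by rw [he]; exact Sym2.eq_swap⟩
  loopless := by constructor; rintro u ⟨hne, -⟩; exact hne rfl

/-- The edge cut `∂(X)`. -/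
def Cut {V E : Type} (ends : E → Sym2 V) (X : Set V) : Set E :=
  {e | ∃ u ∈ X, ∃ w, w ∉ X ∧ ends e = s(u, w)}

/-- Degree of a vertex (counting multiplicities). -/
noncomputable def deg {V E : Type} (ends : E → Sym2 V) (v : V) : ℕ :=
  {e | v ∈ ends e}.ncard

/-- A perfect matching: every vertex is incident with exactly one edge of `M`. -/
def IsPM {V E : Type} (ends : E → Sym2 V) (M : Set E) : Prop :=
  ∀ v : V, ∃! e, e ∈ M ∧ v ∈ ends e

/-- An `r`-graph: a loopless connected `r`-regular multigraph in which every odd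
cut has at least `r` edges. -/
def IsRGraph {V E : Type} (r : ℕ) (ends : E → Sym2 V) : Prop :=
  (∀ e, ¬ (ends e).IsDiag) ∧ (toSimple ends).Connected ∧
    (∀ v, deg ends v = r) ∧ ∀ X : Set V, Odd X.ncard → r ≤ (Cut ends X).ncard

section TutteAux

open SimpleGraph

set_option linter.unusedSectionVars false

variable {V : Type} [Fintype V]

/-- The graph `G` restricted to `B`: vertices outside `B` become isolated. -/
def Del (G : SimpleGraph V) (B : Set V) : SimpleGraph V where
  Adj v w := G.Adj v w ∧ v ∈ B ∧ w ∈ B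
  symm := by constructor; rintro v w ⟨h, hv, hw⟩; exact ⟨h.symm, hw, hv⟩
  loopless := by constructor; rintro v ⟨h, -⟩; exact G.loopless.irrefl v h

lemma Del_le (G : SimpleGraph V) (B : Set V) : Del G B ≤ G := fun _ _ h => h.1

lemma Del_mono (G : SimpleGraph V) {B B' : Set V} (h : B ⊆ B') : Del G B ≤ Del G B' :=
  fun _ _ hadj => ⟨hadj.1, h hadj.2.1, h hadj.2.2⟩

/-- Odd components of `G` restricted to `B`. -/
def oddC (G : SimpleGraph V) (B : Set V) : Set ((Del G B).ConnectedComponent) :=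
  {c | Odd (Nat.card c.supp) ∧ c.supp ⊆ B}

lemma supp_nonempty {G : SimpleGraph V} (c : G.ConnectedComponent) : c.supp.Nonempty := by
  obtain ⟨v, hv⟩ := c.exists_rep
  exact ⟨v, by rw [ConnectedComponent.mem_supp_iff]; exact hv⟩

lemma supp_eq_of_mem {G : SimpleGraph V} {c d : G.ConnectedComponent} {x : V}
    (hc : x ∈ c.supp) (hd : x ∈ d.supp) : c = d := by
  rw [ConnectedComponent.mem_supp_iff] at hc hd; rw [← hc, ← hd]

lemma mem_supp_mk {G : SimpleGraph V} (x : V) : x ∈ (G.connectedComponentMk x).supp := by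
  rw [ConnectedComponent.mem_supp_iff]

/-- A closed set containing a walk's start contains its end. -/
lemma walk_mem_closed {G : SimpleGraph V} {T : Set V}
    (hcl : ∀ x ∈ T, ∀ y, G.Adj x y → y ∈ T) :
    ∀ {a b : V}, G.Walk a b → a ∈ T → b ∈ T := by
  intro a b w
  induction w with
  | nil => exact id
  | cons hab p ih => intro ha; exact ih (hcl _ ha _ hab)

lemma supp_singleton_of_not_mem {G : SimpleGraph V} {B : Set V} {x : V} (hx : x ∉ B) :
    ((Del G B).connectedComponentMk x).supp = {x} := by
  ext y
  simp only [ConnectedComponent.mem_supp_iff, Set.mem_singleton_iff]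
  constructor
  · intro h
    have hr : (Del G B).Reachable x y := (ConnectedComponent.exact h).symm
    obtain ⟨w⟩ := hr
    cases w with
    | nil => rfl
    | cons h p => exact absurd h.2.1 hx
  · rintro rfl; rfl

lemma supp_subset_of_mem_mem {G : SimpleGraph V} {B : Set V} {x : V}
    (c : (Del G B).ConnectedComponent) (hx : x ∈ c.supp) (hxB : x ∈ B) : c.supp ⊆ B := by
  intro y hy
  by_contra hyB
  have hc : c = (Del G B).connectedComponentMk y := supp_eq_of_mem hy (mem_supp_mk y)
  rw [hc, supp_singleton_of_not_mem hyB, Set.mem_singleton_iff] at hx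
  subst hx
  exact hyB hxB

/-- A component supp is either inside `B` or a singleton outside `B`. -/
lemma supp_subset_or {G : SimpleGraph V} {B : Set V} (c : (Del G B).ConnectedComponent) :
    c.supp ⊆ B ∨ ∃ x, x ∉ B ∧ c.supp = {x} := by
  obtain ⟨v, hv⟩ := supp_nonempty c
  by_cases hvB : v ∈ B
  · exact Or.inl (supp_subset_of_mem_mem c hv hvB)
  · refine Or.inr ⟨v, hvB, ?_⟩
    have hc : c = (Del G B).connectedComponentMk v := supp_eq_of_mem hv (mem_supp_mk v)
    rw [hc, supp_singleton_of_not_mem hvB]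

/-- Transfer a component to another graph when its supp is closed and edges inside transfer. -/
lemma exists_supp_eq_of_closed {G₁ G₂ : SimpleGraph V}
    (c : G₁.ConnectedComponent)
    (hadj : ∀ x y, x ∈ c.supp → G₁.Adj x y → G₂.Adj x y)
    (hcl : ∀ x ∈ c.supp, ∀ y, G₂.Adj x y → y ∈ c.supp) :
    ∃ d : G₂.ConnectedComponent, d.supp = c.supp := by
  obtain ⟨v, hvc⟩ := supp_nonempty c
  refine ⟨G₂.connectedComponentMk v, ?_⟩
  have key : ∀ a b, (w : G₁.Walk a b) → a ∈ c.supp → G₂.Reachable a b := by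
    intro a b w
    induction w with
    | nil => exact fun _ => Reachable.refl _
    | @cons a' b' z hab p ih =>
      intro ha
      have hb' : b' ∈ c.supp := by
        rw [ConnectedComponent.mem_supp_iff] at ha ⊢
        rw [← ha]
        exact ConnectedComponent.sound hab.symm.reachable
      exact ((hadj _ _ ha hab).reachable).trans (ih hb')
  ext y
  simp only [ConnectedComponent.mem_supp_iff]
  constructor
  · intro hy
    have hr : G₂.Reachable v y := (ConnectedComponent.exact hy).symm
    obtain ⟨w⟩ := hr
    exact (ConnectedComponent.mem_supp_iff c y).mp (walk_mem_closed hcl w hvc)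
  · intro hy
    have hyc : y ∈ c.supp := (ConnectedComponent.mem_supp_iff c y).mpr hy
    have hr : G₁.Reachable y v := by
      rw [ConnectedComponent.mem_supp_iff] at hyc hvc
      exact ConnectedComponent.exact (hyc.trans hvc.symm)
    obtain ⟨w⟩ := hr
    exact ConnectedComponent.sound (key _ _ w hyc)


lemma mem_supp_of_adj {G : SimpleGraph V} {c : G.ConnectedComponent} {x y : V}
    (hx : x ∈ c.supp) (h : G.Adj x y) : y ∈ c.supp := by
  rw [ConnectedComponent.mem_supp_iff] at hx ⊢
  rw [← hx]
  exact ConnectedComponent.sound h.symm.reachable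

lemma oddC_parity (G : SimpleGraph V) (B : Set V) :
    (oddC G B).ncard % 2 = B.ncard % 2 := by
  classical
  set H := Del G B with hH
  have hall : Odd (Nat.card V) ↔
      Odd (Nat.card ↑{c : H.ConnectedComponent | Odd (Nat.card c.supp)}) := by
    rw [← SimpleGraph.odd_ncard_oddComponents H, Nat.card_coe_set_eq]
    simp only [SimpleGraph.oddComponents, Nat.card_coe_set_eq]
  have hsplit : {c : H.ConnectedComponent | Odd (Nat.card c.supp)} =
      oddC G B ∪ ((fun x => H.connectedComponentMk x) '' Bᶜ) := by
    ext c
    simp only [Set.mem_setOf_eq, Set.mem_union, oddC, Set.mem_image, Set.mem_compl_iff]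
    constructor
    · intro hodd
      rcases supp_subset_or c with hsub | ⟨x, hx, hsupp⟩
      · exact Or.inl ⟨hodd, hsub⟩
      · refine Or.inr ⟨x, hx, ?_⟩
        exact supp_eq_of_mem (mem_supp_mk (G := H) x) (by rw [hsupp]; rfl)
    · rintro (⟨hodd, -⟩ | ⟨x, hx, rfl⟩)
      · exact hodd
      · rw [supp_singleton_of_not_mem hx]
        simp
  have hdisj : Disjoint (oddC G B) ((fun x => H.connectedComponentMk x) '' Bᶜ) := by
    rw [Set.disjoint_left]
    rintro c ⟨-, hsub⟩ ⟨x, hx, rfl⟩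
    rw [supp_singleton_of_not_mem hx] at hsub
    exact hx (hsub rfl)
  have himg : ((fun x => H.connectedComponentMk x) '' Bᶜ).ncard = Bᶜ.ncard := by
    apply Set.ncard_image_of_injOn
    intro x hx y hy hxy
    have := congrArg ConnectedComponent.supp hxy
    rw [supp_singleton_of_not_mem hx, supp_singleton_of_not_mem hy] at this
    exact Set.singleton_eq_singleton_iff.mp this
  have hcard : {c : H.ConnectedComponent | Odd (Nat.card c.supp)}.ncard =
      (oddC G B).ncard + Bᶜ.ncard := by
    rw [hsplit, Set.ncard_union_eq hdisj (Set.toFinite _) (Set.toFinite _), himg]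
  have hVcard : B.ncard + Bᶜ.ncard = Nat.card V :=
    Set.ncard_add_ncard_compl B (Set.toFinite _) (Set.toFinite _)
  rw [Nat.card_coe_set_eq, hcard, ← hVcard, Nat.odd_iff, Nat.odd_iff] at hall
  omega

def TutteHyp (G : SimpleGraph V) (A : Set V) : Prop :=
  ∀ s : Set V, s ⊆ A → (oddC G (A \ s)).ncard ≤ s.ncard

theorem tutte_master (G : SimpleGraph V) (n : ℕ) :
    ∀ A : Set V, A.ncard = n → TutteHyp G A →
      ∃ M : G.Subgraph, M.IsMatching ∧ M.verts = A := by
  induction n using Nat.strong_induction_on with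
  | _ n ih =>
  intro A hAn hT
  classical
  by_cases hA0 : A = ∅
  · refine ⟨⊥, ?_, by rw [hA0, SimpleGraph.Subgraph.verts_bot]⟩
    intro v hv
    simp at hv
  -- the maximal tight set S
  have hemptyS : (∅ : Set V) ∈ {s : Set V | s ⊆ A ∧ (oddC G (A \ s)).ncard = s.ncard} := by
    refine ⟨Set.empty_subset A, ?_⟩
    have := hT ∅ (Set.empty_subset A)
    simpa using Nat.le_zero.mp (by simpa using this)
  obtain ⟨S, ⟨hSA, hSeq⟩, hSmax⟩ :=
    Set.exists_max_image {s : Set V | s ⊆ A ∧ (oddC G (A \ s)).ncard = s.ncard} Set.ncard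
      (Set.toFinite _) ⟨∅, hemptyS⟩
  -- Claim 1 : all components inside A \ S are odd
  have hodd : ∀ c : (Del G (A \ S)).ConnectedComponent, c.supp ⊆ A \ S →
      Odd (Nat.card c.supp) := by
    intro c hcsub
    by_contra heven
    obtain ⟨v, hv⟩ := supp_nonempty c
    have hvAS : v ∈ A \ S := hcsub hv
    set S' : Set V := insert v S with hS'
    have hS'A : S' ⊆ A := by
      rw [hS', Set.insert_subset_iff]
      exact ⟨hvAS.1, hSA⟩
    have hAS' : A \ S' = (A \ S) \ {v} := by
      ext a
      simp only [hS', Set.mem_diff, Set.mem_insert_iff, Set.mem_singleton_iff]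
      tauto
    have hle : Del G (A \ S') ≤ Del G (A \ S) :=
      Del_mono G (by rw [hAS']; exact Set.diff_subset)
    have hvout : v ∉ A \ S' := by
      rw [hAS']
      exact fun h => h.2 rfl
    -- transfer each element of `insert c (oddC G (A \ S))` to an odd component of `A \ S'`
    have hkey : ∀ d : (Del G (A \ S)).ConnectedComponent,
        ∃ d' : (Del G (A \ S')).ConnectedComponent,
          d ∈ insert c (oddC G (A \ S)) →
            (d' ∈ oddC G (A \ S') ∧ d'.supp ⊆ d.supp) := by
      intro d
      by_cases hd : d ∈ insert c (oddC G (A \ S))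
      swap
      · exact ⟨(Del G (A \ S')).connectedComponentMk v, fun h => absurd h hd⟩
      have hiff : Odd (Nat.card d.supp) ↔ Odd (Nat.card
          ↑{d' : (Del G (A \ S')).ConnectedComponent |
            d'.supp ⊆ d.supp ∧ Odd (Nat.card d'.supp)}) := by
        rw [Nat.card_coe_set_eq, ← SimpleGraph.ConnectedComponent.odd_oddComponents_ncard_subset_supp
          (Del G (A \ S')) hle d, Nat.card_coe_set_eq]
        congr! 2
        ext x
        simp only [Set.mem_sep_iff, Set.mem_setOf_eq, Nat.card_coe_set_eq]
        exact and_comm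
      rcases Set.mem_insert_iff.mp hd with rfl | hdodd
      · -- the even component containing v
        have hcnt : ¬ Odd (Nat.card
            {d' : (Del G (A \ S')).ConnectedComponent |
              d'.supp ⊆ d.supp ∧ Odd (Nat.card d'.supp)}) := fun h => heven (hiff.mpr h)
        have hvmem : (Del G (A \ S')).connectedComponentMk v ∈
            {d' : (Del G (A \ S')).ConnectedComponent |
              d'.supp ⊆ d.supp ∧ Odd (Nat.card d'.supp)} := by
          constructor
          · rw [supp_singleton_of_not_mem hvout]
            exact Set.singleton_subset_iff.mpr hv
          · rw [supp_singleton_of_not_mem hvout]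
            simp
        have hpos : 0 < Nat.card {d' : (Del G (A \ S')).ConnectedComponent |
              d'.supp ⊆ d.supp ∧ Odd (Nat.card d'.supp)} := by
          rw [Nat.card_coe_set_eq]
          exact (Set.ncard_pos (Set.toFinite _)).mpr ⟨_, hvmem⟩
        have h2 : 1 < ({d' : (Del G (A \ S')).ConnectedComponent |
              d'.supp ⊆ d.supp ∧ Odd (Nat.card d'.supp)}).ncard := by
          rw [Nat.card_coe_set_eq] at hcnt hpos
          rw [Nat.odd_iff] at hcnt
          omega
        obtain ⟨d', hd'mem, hd'ne⟩ := Set.exists_ne_of_one_lt_ncard h2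
          ((Del G (A \ S')).connectedComponentMk v)
        refine ⟨d', fun _ => ⟨⟨hd'mem.2, ?_⟩, hd'mem.1⟩⟩
        rcases supp_subset_or d' with hsub | ⟨x, hx, hsupp⟩
        · exact hsub
        · exfalso
          have hxc : x ∈ d.supp := hd'mem.1 (by rw [hsupp]; rfl)
          have hxv : x = v := by
            have : x ∈ A \ S := hcsub hxc
            by_contra hne
            exact hx (by rw [hAS']; exact ⟨this, hne⟩)
          subst hxv
          exact hd'ne (supp_eq_of_mem (by rw [hsupp]; rfl) (mem_supp_mk x))
      · -- an odd component not containing v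
        have hvd : v ∉ d.supp := by
          intro hvd
          have : c = d := supp_eq_of_mem hv hvd
          rw [← this] at hdodd
          exact heven hdodd.1
        have hcnt : Odd (Nat.card
            {d' : (Del G (A \ S')).ConnectedComponent |
              d'.supp ⊆ d.supp ∧ Odd (Nat.card d'.supp)}) := hiff.mp hdodd.1
        have hne : ({d' : (Del G (A \ S')).ConnectedComponent |
              d'.supp ⊆ d.supp ∧ Odd (Nat.card d'.supp)}).Nonempty := by
          apply Set.nonempty_of_ncard_ne_zero
          rw [← Nat.card_coe_set_eq]
          rw [Nat.odd_iff] at hcnt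
          omega
        obtain ⟨d', hd'mem⟩ := hne
        refine ⟨d', fun _ => ⟨⟨hd'mem.2, ?_⟩, hd'mem.1⟩⟩
        intro x hx
        rw [hAS']
        refine ⟨hdodd.2 (hd'mem.1 hx), ?_⟩
        intro hxv
        rw [Set.mem_singleton_iff] at hxv
        subst hxv
        exact hvd (hd'mem.1 hx)
    choose g hg using hkey
    have hinj : Set.InjOn g (insert c (oddC G (A \ S))) := by
      intro d₁ hd₁ d₂ hd₂ hgeq
      obtain ⟨w, hw⟩ := supp_nonempty (g d₁)
      have h1 : w ∈ d₁.supp := (hg d₁ hd₁).2 hw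
      have h2 : w ∈ d₂.supp := (hg d₂ hd₂).2 (hgeq ▸ hw)
      exact supp_eq_of_mem h1 h2
    have hcard : (insert c (oddC G (A \ S))).ncard ≤ (oddC G (A \ S')).ncard := by
      apply Set.ncard_le_ncard_of_injOn g
      · exact fun d hd => (hg d hd).1
      · exact hinj
    have hcnotin : c ∉ oddC G (A \ S) := fun h => heven h.1
    rw [Set.ncard_insert_of_notMem hcnotin (Set.toFinite _), hSeq] at hcard
    have hS'card : S'.ncard = S.ncard + 1 :=
      Set.ncard_insert_of_notMem hvAS.2 (Set.toFinite _)
    have hupper := hT S' hS'A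
    have heq : (oddC G (A \ S')).ncard = S'.ncard := by omega
    have := hSmax S' ⟨hS'A, heq⟩
    omega
  have hC : {c : (Del G (A \ S)).ConnectedComponent | c.supp ⊆ A \ S} = oddC G (A \ S) := by
    ext c
    exact ⟨fun h => ⟨hodd c h, h⟩, fun h => h.2⟩
  -- Claim 2 : S is nonempty
  have hSne : S.Nonempty := by
    rw [Set.nonempty_iff_ne_empty]
    intro hS0
    subst hS0
    obtain ⟨a, ha⟩ := Set.nonempty_iff_ne_empty.mpr hA0
    have haAS : a ∈ A \ (∅ : Set V) := ⟨ha, fun h => h⟩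
    have hmem : ((Del G (A \ (∅ : Set V))).connectedComponentMk a).supp ⊆ A \ (∅ : Set V) :=
      supp_subset_of_mem_mem _ (mem_supp_mk a) haAS
    have hcmem : (Del G (A \ (∅:Set V))).connectedComponentMk a ∈ oddC G (A \ (∅:Set V)) := by
      rw [← hC]; exact hmem
    have hne : (oddC G (A \ (∅:Set V))).Nonempty := ⟨_, hcmem⟩
    have := (Set.ncard_pos (Set.toFinite _)).mpr hne
    simp only [hSeq] at this
    simp at this
  -- Claim 3+4 : Hall system of distinct representatives, surjective onto S
  obtain ⟨f, hfinj, hfprop⟩ :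
      ∃ f : ↥(oddC G (A \ S)) → V, Function.Injective f ∧
        ∀ c : ↥(oddC G (A \ S)), f c ∈ S ∧ ∃ x ∈ (c : (Del G (A \ S)).ConnectedComponent).supp,
          G.Adj x (f c) := by
    obtain ⟨a₀, ha₀⟩ := Set.nonempty_iff_ne_empty.mpr hA0
    set t : ↥(oddC G (A \ S)) → Finset V := fun c =>
      (Set.toFinite {v | v ∈ S ∧ ∃ x ∈ (c : (Del G (A \ S)).ConnectedComponent).supp,
        G.Adj x v}).toFinset with ht
    have htmem : ∀ (c : ↥(oddC G (A \ S))) (v : V), v ∈ t c ↔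
        v ∈ S ∧ ∃ x ∈ (c : (Del G (A \ S)).ConnectedComponent).supp, G.Adj x v := by
      intro c v
      rw [ht, Set.Finite.mem_toFinset]
      rfl
    have hall : ∀ T : Finset ↥(oddC G (A \ S)), T.card ≤ (T.biUnion t).card := by
      intro T
      set s₀ : Set V := ↑(T.biUnion t) with hs₀
      have hs₀S : s₀ ⊆ S := by
        intro v hv
        rw [hs₀, Finset.coe_biUnion] at hv
        simp only [Set.mem_iUnion, Finset.mem_coe] at hv
        obtain ⟨c, -, hc⟩ := hv
        exact ((htmem c v).mp hc).1
      have hs₀A : s₀ ⊆ A := hs₀S.trans hSA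
      have hsub : A \ S ⊆ A \ s₀ := Set.diff_subset_diff_right hs₀S
      have htrans : ∀ c : ↥(oddC G (A \ S)), c ∈ T →
          ∃ d : (Del G (A \ s₀)).ConnectedComponent,
            d ∈ oddC G (A \ s₀) ∧
            d.supp = (c : (Del G (A \ S)).ConnectedComponent).supp := by
        intro c hcT
        have hcsupp : (c : (Del G (A \ S)).ConnectedComponent).supp ⊆ A \ S := c.prop.2
        obtain ⟨d, hd⟩ := exists_supp_eq_of_closed
          (c : (Del G (A \ S)).ConnectedComponent)
          (G₂ := Del G (A \ s₀))
          (by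
            intro x y hx hxy
            exact ⟨hxy.1, hsub hxy.2.1, hsub hxy.2.2⟩)
          (by
            intro x hx y hxy
            obtain ⟨hGxy, hxm, hym⟩ := hxy
            by_cases hyS : y ∈ S
            · exfalso
              have : y ∈ t c := (htmem c y).mpr ⟨hyS, x, hx, hGxy⟩
              have : y ∈ s₀ := by
                rw [hs₀]
                exact Finset.mem_coe.mpr (Finset.mem_biUnion.mpr ⟨c, hcT, this⟩)
              exact hym.2 this
            · have : (Del G (A \ S)).Adj x y := ⟨hGxy, hcsupp hx, ⟨hym.1, hyS⟩⟩
              exact mem_supp_of_adj hx this)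
        exact ⟨d, ⟨by rw [hd]; exact c.prop.1, by rw [hd]; exact hcsupp.trans hsub⟩, hd⟩
      have hch : ∀ c : ↥(oddC G (A \ S)), ∃ d : (Del G (A \ s₀)).ConnectedComponent,
          c ∈ T → (d ∈ oddC G (A \ s₀) ∧
            d.supp = (c : (Del G (A \ S)).ConnectedComponent).supp) := by
        intro c
        by_cases hcT : c ∈ T
        · obtain ⟨d, h1, h2⟩ := htrans c hcT
          exact ⟨d, fun _ => ⟨h1, h2⟩⟩
        · exact ⟨(Del G (A \ s₀)).connectedComponentMk a₀, fun h => absurd h hcT⟩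
      choose g hg using hch
      have hcard1 : T.card ≤ (oddC G (A \ s₀)).ncard := by
        rw [← Set.ncard_coe_finset]
        apply Set.ncard_le_ncard_of_injOn g
        · intro c hc
          exact (hg c (Finset.mem_coe.mp hc)).1
        · intro c₁ hc₁ c₂ hc₂ hgeq
          obtain ⟨v₁, hv₁⟩ := supp_nonempty (c₁ : (Del G (A \ S)).ConnectedComponent)
          have h1 := (hg c₁ (Finset.mem_coe.mp hc₁)).2
          have h2 := (hg c₂ (Finset.mem_coe.mp hc₂)).2
          have : v₁ ∈ (c₂ : (Del G (A \ S)).ConnectedComponent).supp := by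
            rw [← h2, ← hgeq, h1]
            exact hv₁
          exact Subtype.ext (supp_eq_of_mem hv₁ this)
      calc T.card ≤ (oddC G (A \ s₀)).ncard := hcard1
        _ ≤ s₀.ncard := hT s₀ hs₀A
        _ = (T.biUnion t).card := Set.ncard_coe_finset _
    obtain ⟨f, hfinj, hft⟩ := (Finset.all_card_le_biUnion_card_iff_exists_injective t).mp hall
    refine ⟨f, hfinj, fun c => ?_⟩
    have := (htmem c (f c)).mp (hft c)
    exact ⟨this.1, this.2⟩
  have hfsurj : ∀ t ∈ S, ∃ c, f c = t := by
    have hrange : Set.range f = S := by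
      apply Set.eq_of_subset_of_ncard_le
      · rintro t ⟨c, rfl⟩
        exact (hfprop c).1
      · rw [← hSeq, ← Nat.card_coe_set_eq (oddC G (A \ S)),
          ← Nat.card_range_of_injective hfinj, Nat.card_coe_set_eq]
      · exact Set.toFinite _
    intro t ht
    rw [← hrange] at ht
    exact ht
  -- Claim 5 : recursive matchings inside each component
  have hrec : ∀ c : ↥(oddC G (A \ S)), ∃ (x : V) (M : G.Subgraph),
      x ∈ (c : (Del G (A \ S)).ConnectedComponent).supp ∧ G.Adj x (f c) ∧
      M.IsMatching ∧ M.verts = (c : (Del G (A \ S)).ConnectedComponent).supp \ {x} := by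
    intro c
    obtain ⟨x, hx, hadj⟩ := (hfprop c).2
    set K : Set V := (c : (Del G (A \ S)).ConnectedComponent).supp with hK
    have hKsub : K ⊆ A \ S := c.prop.2
    set Ac : Set V := K \ {x} with hAc
    have hAcA : Ac ⊆ A := fun a ha => (hKsub ha.1).1
    have hlt : Ac.ncard < n := by
      rw [← hAn]
      apply Set.ncard_lt_ncard _ (Set.toFinite A)
      constructor
      · exact hAcA
      · intro hsub
        obtain ⟨s₁, hs₁⟩ := hSne
        exact (hKsub (hsub (hSA hs₁)).1).2 hs₁
    have hTc : TutteHyp G Ac := by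
      intro s hs
      by_contra hcon
      push_neg at hcon
      -- parity: the number of odd components is at least s.ncard + 2
      have hpar := oddC_parity G (Ac \ s)
      have hKodd : Odd K.ncard := by
        rw [← Nat.card_coe_set_eq]
        exact c.prop.1
      have hAcc : Ac.ncard + 1 = K.ncard :=
        Set.ncard_diff_singleton_add_one hx (Set.toFinite _)
      have hdiffc : (Ac \ s).ncard + s.ncard = Ac.ncard :=
        Set.ncard_diff_add_ncard_of_subset hs (Set.toFinite _)
      have hq2 : s.ncard + 2 ≤ (oddC G (Ac \ s)).ncard := by
        rw [Nat.odd_iff] at hKodd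
        omega
      -- the new cut set
      set S'' : Set V := insert x S ∪ s with hS''
      have hxS : x ∉ S := (hKsub hx).2
      have hxs : x ∉ s := fun h => (hs h).2 rfl
      have hsS : ∀ a ∈ s, a ∉ S := fun a ha => (hKsub (hs ha).1).2
      have hsK : s ⊆ K := fun a ha => (hs ha).1
      have hS''A : S'' ⊆ A := by
        rw [hS'']
        apply Set.union_subset
        · rw [Set.insert_subset_iff]
          exact ⟨(hKsub hx).1, hSA⟩
        · exact hs.trans hAcA
      have hS''card : S''.ncard = S.ncard + 1 + s.ncard := by
        rw [hS'', Set.ncard_union_eq ?_ (Set.toFinite _) (Set.toFinite _),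
          Set.ncard_insert_of_notMem hxS (Set.toFinite _)]
        rw [Set.disjoint_left]
        rintro a ha hmem
        rcases Set.mem_insert_iff.mp ha with rfl | haS
        · exact hxs hmem
        · exact hsS a hmem haS
      have hAdiff : A \ S'' = ((A \ S) \ {x}) \ s := by
        ext a
        simp only [hS'', Set.mem_diff, Set.mem_union, Set.mem_insert_iff,
          Set.mem_singleton_iff]
        tauto
      have hAcsub : Ac \ s ⊆ A \ S'' := by
        rw [hAdiff]
        intro a ha
        exact ⟨⟨hKsub ha.1.1, ha.1.2⟩, ha.2⟩
      -- transfer the other odd components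
      have hkey1 : ∀ d : (Del G (A \ S)).ConnectedComponent,
          ∃ d'' : (Del G (A \ S'')).ConnectedComponent,
            (d ∈ oddC G (A \ S) ∧ d ≠ (c : (Del G (A \ S)).ConnectedComponent)) →
              d'' ∈ oddC G (A \ S'') ∧ d''.supp = d.supp := by
        intro d
        by_cases hd : d ∈ oddC G (A \ S) ∧ d ≠ (c : (Del G (A \ S)).ConnectedComponent)
        swap
        · exact ⟨(Del G (A \ S'')).connectedComponentMk x, fun h => absurd h hd⟩
        have hdisjK : Disjoint d.supp K := by
          rw [hK]
          exact SimpleGraph.pairwise_disjoint_supp_connectedComponent _ hd.2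
        have hdsub : d.supp ⊆ A \ S'' := by
          rw [hAdiff]
          intro a ha
          refine ⟨⟨hd.1.2 ha, ?_⟩, ?_⟩
          · intro hax
            rw [Set.mem_singleton_iff] at hax
            subst hax
            exact Set.disjoint_left.mp hdisjK ha hx
          · intro has
            exact Set.disjoint_left.mp hdisjK ha (hsK has)
        obtain ⟨d'', hd''⟩ := exists_supp_eq_of_closed d
          (G₂ := Del G (A \ S''))
          (by
            intro a b ha hab
            exact ⟨hab.1, hdsub ha, hdsub (mem_supp_of_adj ha hab)⟩)
          (by
            intro a ha b hab
            have : (Del G (A \ S)).Adj a b :=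
              ⟨hab.1, (hAdiff ▸ hab.2.1).1.1, (hAdiff ▸ hab.2.2).1.1⟩
            exact mem_supp_of_adj ha this)
        exact ⟨d'', fun _ => ⟨⟨by rw [hd'']; exact hd.1.1, by rw [hd'']; exact hdsub⟩, hd''⟩⟩
      have hkey2 : ∀ d : (Del G (Ac \ s)).ConnectedComponent,
          ∃ d'' : (Del G (A \ S'')).ConnectedComponent,
            d ∈ oddC G (Ac \ s) →
              d'' ∈ oddC G (A \ S'') ∧ d''.supp = d.supp := by
        intro d
        by_cases hd : d ∈ oddC G (Ac \ s)
        swap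
        · exact ⟨(Del G (A \ S'')).connectedComponentMk x, fun h => absurd h hd⟩
        have hdsub : d.supp ⊆ Ac \ s := hd.2
        obtain ⟨d'', hd''⟩ := exists_supp_eq_of_closed d
          (G₂ := Del G (A \ S''))
          (by
            intro a b ha hab
            exact ⟨hab.1, hAcsub hab.2.1, hAcsub hab.2.2⟩)
          (by
            intro a ha b hab
            have haK : a ∈ K := (hdsub ha).1.1
            have hbAS : b ∈ A \ S := by
              have := hab.2.2
              rw [hAdiff] at this
              exact this.1.1
            have haAS : a ∈ A \ S := hKsub haK
            have hbK : b ∈ K := by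
              rw [hK]
              exact mem_supp_of_adj (by rw [← hK]; exact haK) ⟨hab.1, haAS, hbAS⟩
            have hbAc : b ∈ Ac \ s := by
              have hb := hab.2.2
              rw [hAdiff] at hb
              exact ⟨⟨hbK, hb.1.2⟩, hb.2⟩
            have : (Del G (Ac \ s)).Adj a b := ⟨hab.1, hdsub ha, hbAc⟩
            exact mem_supp_of_adj ha this)
        exact ⟨d'', fun _ => ⟨⟨by rw [hd'']; exact hd.1, by rw [hd'']; exact hdsub.trans hAcsub⟩,
          hd''⟩⟩
      choose g₁ hg₁ using hkey1
      choose g₂ hg₂ using hkey2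
      -- count
      set W₁ : Set ((Del G (A \ S)).ConnectedComponent) :=
        oddC G (A \ S) \ {(c : (Del G (A \ S)).ConnectedComponent)} with hW₁
      have him1 : g₁ '' W₁ ⊆ oddC G (A \ S'') := by
        rintro d'' ⟨d, hd, rfl⟩
        exact (hg₁ d ⟨hd.1, hd.2⟩).1
      have him2 : g₂ '' (oddC G (Ac \ s)) ⊆ oddC G (A \ S'') := by
        rintro d'' ⟨d, hd, rfl⟩
        exact (hg₂ d hd).1
      have hinj1 : Set.InjOn g₁ W₁ := by
        intro d₁ hd₁ d₂ hd₂ heq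
        obtain ⟨w, hw⟩ := supp_nonempty d₁
        have h1 : w ∈ (g₁ d₁).supp := by rw [(hg₁ d₁ ⟨hd₁.1, hd₁.2⟩).2]; exact hw
        have h2 : w ∈ d₂.supp := by
          rw [← (hg₁ d₂ ⟨hd₂.1, hd₂.2⟩).2, ← heq]
          exact h1
        exact supp_eq_of_mem hw h2
      have hinj2 : Set.InjOn g₂ (oddC G (Ac \ s)) := by
        intro d₁ hd₁ d₂ hd₂ heq
        obtain ⟨w, hw⟩ := supp_nonempty d₁
        have h1 : w ∈ (g₂ d₁).supp := by rw [(hg₂ d₁ hd₁).2]; exact hw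
        have h2 : w ∈ d₂.supp := by
          rw [← (hg₂ d₂ hd₂).2, ← heq]
          exact h1
        exact supp_eq_of_mem hw h2
      have hdisjim : Disjoint (g₁ '' W₁) (g₂ '' (oddC G (Ac \ s))) := by
        rw [Set.disjoint_left]
        rintro d'' ⟨d₁, hd₁, rfl⟩ ⟨d₂, hd₂, heq⟩
        obtain ⟨w, hw⟩ := supp_nonempty d₂
        have h2 : w ∈ (g₁ d₁).supp := by rw [← heq, (hg₂ d₂ hd₂).2]; exact hw
        rw [(hg₁ d₁ ⟨hd₁.1, hd₁.2⟩).2] at h2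
        have hwK : w ∈ K := (hd₂.2 hw).1.1
        have hd1c : d₁ ≠ (c : (Del G (A \ S)).ConnectedComponent) := hd₁.2
        have hdisjK : Disjoint d₁.supp K :=
          SimpleGraph.pairwise_disjoint_supp_connectedComponent _ hd1c
        exact Set.disjoint_left.mp hdisjK h2 hwK
      have hcmem : (c : (Del G (A \ S)).ConnectedComponent) ∈ oddC G (A \ S) := c.prop
      have hW₁card : W₁.ncard + 1 = S.ncard := by
        rw [hW₁, ← hSeq]
        exact Set.ncard_diff_singleton_add_one hcmem (Set.toFinite _)
      have him1card : (g₁ '' W₁).ncard = W₁.ncard := Set.ncard_image_of_injOn hinj1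
      have him2card : (g₂ '' (oddC G (Ac \ s))).ncard = (oddC G (Ac \ s)).ncard :=
        Set.ncard_image_of_injOn hinj2
      have htotal : (g₁ '' W₁).ncard + (g₂ '' (oddC G (Ac \ s))).ncard ≤
          (oddC G (A \ S'')).ncard := by
        rw [← Set.ncard_union_eq hdisjim (Set.toFinite _) (Set.toFinite _)]
        exact Set.ncard_le_ncard (Set.union_subset him1 him2) (Set.toFinite _)
      have hub := hT S'' hS''A
      have heqS'' : (oddC G (A \ S'')).ncard = S''.ncard := by omega
      have := hSmax S'' ⟨hS''A, heqS''⟩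
      omega
    obtain ⟨M, hM, hMv⟩ := ih Ac.ncard hlt Ac rfl hTc
    exact ⟨x, M, hx, hadj, hM, hMv⟩
  choose xc Mc hxc hadjc hMc hMcv using hrec
  -- assembly
  have hsub_supp : ∀ c : ↥(oddC G (A \ S)),
      (c : (Del G (A \ S)).ConnectedComponent).supp ⊆ A \ S := fun c => c.prop.2
  set M' : ↥(oddC G (A \ S)) → G.Subgraph :=
    fun c => Mc c ⊔ G.subgraphOfAdj (hadjc c) with hM'def
  have hM'm : ∀ c, (M' c).IsMatching := by
    intro c
    apply (hMc c).sup (SimpleGraph.Subgraph.IsMatching.subgraphOfAdj _)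
    rw [(hMc c).support_eq_verts, hMcv c,
      (SimpleGraph.Subgraph.IsMatching.subgraphOfAdj (hadjc c)).support_eq_verts,
      SimpleGraph.subgraphOfAdj_verts]
    rw [Set.disjoint_left]
    rintro a ⟨ha, hane⟩ hb
    rcases hb with rfl | rfl
    · exact hane rfl
    · exact ((hsub_supp c) ha).2 (hfprop c).1
  have hM'v : ∀ c, (M' c).verts =
      (c : (Del G (A \ S)).ConnectedComponent).supp ∪ {f c} := by
    intro c
    rw [hM'def]
    simp only [SimpleGraph.Subgraph.verts_sup, hMcv c, SimpleGraph.subgraphOfAdj_verts]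
    have hx := hxc c
    ext a
    simp only [Set.mem_union, Set.mem_diff, Set.mem_singleton_iff, Set.mem_insert_iff]
    constructor
    · rintro (⟨h1, -⟩ | (rfl | rfl))
      · exact Or.inl h1
      · exact Or.inl hx
      · exact Or.inr rfl
    · rintro (h1 | rfl)
      · by_cases hax : a = xc c
        · exact Or.inr (Or.inl hax)
        · exact Or.inl ⟨h1, hax⟩
      · exact Or.inr (Or.inr rfl)
  refine ⟨⨆ c, M' c, SimpleGraph.Subgraph.IsMatching.iSup hM'm ?_, ?_⟩
  · intro c d hcd
    show Disjoint (M' c).support (M' d).support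
    rw [(hM'm c).support_eq_verts, (hM'm d).support_eq_verts, hM'v, hM'v]
    have hvalne : (c : (Del G (A \ S)).ConnectedComponent) ≠ d := by
      intro h
      exact hcd (Subtype.ext h)
    have hdisj : Disjoint (c : (Del G (A \ S)).ConnectedComponent).supp
        (d : (Del G (A \ S)).ConnectedComponent).supp :=
      SimpleGraph.pairwise_disjoint_supp_connectedComponent _ hvalne
    rw [Set.disjoint_left] at hdisj ⊢
    rintro a (ha | rfl) hb
    · rcases hb with hb | rfl
      · exact hdisj ha hb
      · exact ((hsub_supp c) ha).2 (hfprop d).1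
    · rcases hb with hb | hb
      · exact ((hsub_supp d) hb).2 (hfprop c).1
      · exact hcd (hfinj hb)
  · rw [SimpleGraph.Subgraph.verts_iSup]
    ext a
    simp only [Set.mem_iUnion]
    constructor
    · rintro ⟨c, hc⟩
      rw [hM'v c] at hc
      rcases hc with hc | rfl
      · exact ((hsub_supp c) hc).1
      · exact hSA (hfprop c).1
    · intro ha
      by_cases haS : a ∈ S
      · obtain ⟨c, hc⟩ := hfsurj a haS
        exact ⟨c, by rw [hM'v c, ← hc]; exact Or.inr rfl⟩
      · have haAS : a ∈ A \ S := ⟨ha, haS⟩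
        have hmem : ((Del G (A \ S)).connectedComponentMk a).supp ⊆ A \ S :=
          supp_subset_of_mem_mem _ (mem_supp_mk a) haAS
        have hcmem : (Del G (A \ S)).connectedComponentMk a ∈ oddC G (A \ S) := by
          rw [← hC]; exact hmem
        exact ⟨⟨_, hcmem⟩, by rw [hM'v]; exact Or.inl (mem_supp_mk a)⟩

end TutteAux

/-- Every `r`-graph (`r ≥ 3`) is matching covered: it is connected, has order at
least two, and every edge lies in some perfect matching. -/
theorem stmt3 {V E : Type} [Fintype V] [Fintype E]
    (ends : E → Sym2 V) (r : ℕ) (hr : 3 ≤ r) (hG : IsRGraph r ends) :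
    (toSimple ends).Connected ∧ 2 ≤ Fintype.card V ∧
      ∀ e, ∃ M, IsPM ends M ∧ e ∈ M := by
  classical
  obtain ⟨hloop, hconn, hdeg, hcut⟩ := hG
  have hne : Nonempty V := hconn.nonempty
  refine ⟨hconn, ?_, ?_⟩
  · -- at least two vertices
    obtain ⟨v₀⟩ := hne
    have hd : ({e | v₀ ∈ ends e}).ncard = r := hdeg v₀
    have : ({e | v₀ ∈ ends e}).Nonempty := by
      apply Set.nonempty_of_ncard_ne_zero
      omega
    obtain ⟨e, he⟩ := this
    have hother := Sym2.other_spec (he : v₀ ∈ ends e)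
    have hneq : v₀ ≠ Sym2.Mem.other he := by
      intro h
      apply hloop e
      rw [← hother, ← h]
      exact Sym2.mk_isDiag_iff.mpr rfl
    exact Fintype.one_lt_card_iff.mpr ⟨v₀, Sym2.Mem.other he, hneq⟩
  · -- every edge lies in a perfect matching
    intro e₀
    obtain ⟨u, v, huv⟩ : ∃ x y, ends e₀ = s(x, y) :=
      Sym2.ind (fun x y => ⟨x, y, rfl⟩) (ends e₀)
    have hune : u ≠ v := fun h => hloop e₀ (by rw [huv, h]; exact Sym2.mk_isDiag_iff.mpr rfl)
    have hVeven : Fintype.card V % 2 = 0 := by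
      by_contra hodd
      have h1 : Odd ((Set.univ : Set V).ncard) := by
        rw [Set.ncard_univ, Nat.card_eq_fintype_card, Nat.odd_iff]
        omega
      have h2 := hcut Set.univ h1
      have h3 : Cut ends Set.univ = ∅ := by
        ext e
        simp only [Cut, Set.mem_setOf_eq, Set.mem_empty_iff_false, iff_false, not_exists]
        rintro x ⟨-, w, hw, -⟩
        exact hw (Set.mem_univ w)
      rw [h3] at h2
      simp at h2
      omega
    set GS : SimpleGraph V := toSimple ends with hGS
    set A : Set V := Set.univ \ {u, v} with hA
    have hAuv : ∀ a ∈ A, a ≠ u ∧ a ≠ v := by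
      intro a ha
      rw [hA] at ha
      simp only [Set.mem_diff, Set.mem_univ, true_and, Set.mem_insert_iff,
        Set.mem_singleton_iff] at ha
      tauto
    have hAcard : A.ncard + 2 = Fintype.card V := by
      have : ({u, v} : Set V).ncard = 2 := Set.ncard_pair hune
      have h := Set.ncard_diff_add_ncard_of_subset
        (Set.subset_univ ({u, v} : Set V)) (Set.toFinite _)
      rw [this, Set.ncard_univ, Nat.card_eq_fintype_card] at h
      rw [hA]
      exact h
    have hTA : TutteHyp GS A := by
      intro s hsA
      by_contra hcon
      push_neg at hcon
      have hpar := oddC_parity GS (A \ s)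
      have hds : (A \ s).ncard + s.ncard = A.ncard :=
        Set.ncard_diff_add_ncard_of_subset hsA (Set.toFinite _)
      have hq2 : s.ncard + 2 ≤ (oddC GS (A \ s)).ncard := by omega
      set sf : Finset V := (Set.toFinite s).toFinset with hsf
      set If : V → Finset E := fun w => (Set.toFinite {e | w ∈ ends e}).toFinset with hIf
      have hIfcard : ∀ w, (If w).card = r := by
        intro w
        rw [hIf, ← Set.ncard_eq_toFinset_card _ (Set.toFinite _)]
        exact hdeg w
      set ocf : Finset ((Del GS (A \ s)).ConnectedComponent) :=
        (Set.toFinite (oddC GS (A \ s))).toFinset with hocf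
      have hocfcard : ocf.card = (oddC GS (A \ s)).ncard := by
        rw [hocf, ← Set.ncard_eq_toFinset_card _ (Set.toFinite _)]
      set Cf : (Del GS (A \ s)).ConnectedComponent → Finset E :=
        fun c => (Set.toFinite (Cut ends c.supp)).toFinset with hCf
      have hCfmem : ∀ c e, e ∈ Cf c ↔ e ∈ Cut ends c.supp := by
        intro c e
        rw [hCf, Set.Finite.mem_toFinset]
      have hocfmem : ∀ c, c ∈ ocf ↔ c ∈ oddC GS (A \ s) := by
        intro c
        rw [hocf, Set.Finite.mem_toFinset]
      -- an edge leaving a component ends in {u, v} ∪ s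
      have hleave : ∀ (c : (Del GS (A \ s)).ConnectedComponent), c ∈ oddC GS (A \ s) →
          ∀ x y e, x ∈ c.supp → ends e = s(x, y) → y ∉ c.supp →
            y = u ∨ y = v ∨ y ∈ s := by
        intro c hc x y e hx he hy
        by_contra hcon2
        push_neg at hcon2
        have hyA : y ∈ A \ s := by
          refine ⟨?_, hcon2.2.2⟩
          rw [hA]
          simp only [Set.mem_diff, Set.mem_univ, true_and, Set.mem_insert_iff,
            Set.mem_singleton_iff]
          tauto
        have hxy : x ≠ y := fun h => hloop e (by rw [he, h]; exact Sym2.mk_isDiag_iff.mpr rfl)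
        have hadj : (Del GS (A \ s)).Adj x y := ⟨⟨hxy, e, he⟩, hc.2 hx, hyA⟩
        exact hy (mem_supp_of_adj hx hadj)
      have hrle : ∀ c ∈ ocf, r ≤ (Cf c).card := by
        intro c hc
        rw [hocfmem] at hc
        have hodd : Odd c.supp.ncard := by
          rw [← Nat.card_coe_set_eq]
          exact hc.1
        have := hcut c.supp hodd
        rw [hCf, ← Set.ncard_eq_toFinset_card _ (Set.toFinite _)]
        exact this
      have hdisj : ∀ c ∈ ocf, ∀ c' ∈ ocf, c ≠ c' → Disjoint (Cf c) (Cf c') := by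
        intro c hc c' hc' hne'
        rw [Finset.disjoint_left]
        intro e he he'
        rw [hCfmem] at he he'
        obtain ⟨x, hx, y, hy, hexy⟩ := he
        obtain ⟨x', hx', y', hy', hexy'⟩ := he'
        rw [hocfmem] at hc hc'
        have heq : s(x, y) = s(x', y') := by rw [← hexy, ← hexy']
        rw [Sym2.eq_iff] at heq
        rcases heq with ⟨rfl, rfl⟩ | ⟨rfl, rfl⟩
        · exact hne' (supp_eq_of_mem hx hx')
        · -- here x = y' and y = x', so y ∈ c'.supp
          have hxy : x ≠ y := fun h => hloop e (by rw [hexy, h]; exact Sym2.mk_isDiag_iff.mpr rfl)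
          have hadj : (Del GS (A \ s)).Adj x y := ⟨⟨hxy, e, hexy⟩, hc.2 hx, hc'.2 hx'⟩
          exact hy (mem_supp_of_adj hx hadj)
      have he₀ : ∀ c ∈ ocf, e₀ ∉ Cf c := by
        intro c hc hmem
        rw [hCfmem] at hmem
        obtain ⟨x, hx, y, hy, hexy⟩ := hmem
        rw [hocfmem] at hc
        have hxA : x ∈ A := (hc.2 hx).1
        have heq : s(u, v) = s(x, y) := by rw [← huv, ← hexy]
        rw [Sym2.eq_iff] at heq
        rcases heq with ⟨h1, -⟩ | ⟨-, h2⟩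
        · exact (hAuv x hxA).1 h1.symm
        · exact (hAuv x hxA).2 h2.symm
      set Wf : Finset V := insert u (insert v sf) with hWf
      have hbig : ∀ c ∈ ocf, Cf c ⊆ Wf.biUnion (fun w => (If w).erase e₀) := by
        intro c hc e he
        have hee₀ : e ≠ e₀ := fun h => he₀ c hc (h ▸ he)
        rw [hCfmem] at he
        obtain ⟨x, hx, y, hy, hexy⟩ := he
        rw [hocfmem] at hc
        have hcase := hleave c hc x y e hx hexy hy
        have hyIf : e ∈ (If y).erase e₀ := by
          rw [Finset.mem_erase]
          refine ⟨hee₀, ?_⟩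
          rw [hIf, Set.Finite.mem_toFinset]
          rw [Set.mem_setOf_eq, hexy]
          exact Sym2.mem_mk_right x y
        rw [Finset.mem_biUnion]
        refine ⟨y, ?_, hyIf⟩
        rw [hWf]
        simp only [Finset.mem_insert]
        rcases hcase with h | h | h
        · exact Or.inl h
        · exact Or.inr (Or.inl h)
        · exact Or.inr (Or.inr (by rw [hsf, Set.Finite.mem_toFinset]; exact h))
      -- counting
      have h1 : (oddC GS (A \ s)).ncard * r ≤ (ocf.biUnion Cf).card := by
        rw [Finset.card_biUnion hdisj, ← hocfcard]
        calc ocf.card * r = ocf.card • r := by rw [smul_eq_mul]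
          _ ≤ ∑ c ∈ ocf, (Cf c).card := Finset.card_nsmul_le_sum ocf _ r hrle
      have h2 : (ocf.biUnion Cf).card ≤ ∑ w ∈ Wf, ((If w).erase e₀).card := by
        calc (ocf.biUnion Cf).card ≤ (Wf.biUnion (fun w => (If w).erase e₀)).card :=
              Finset.card_le_card (Finset.biUnion_subset.mpr hbig)
          _ ≤ ∑ w ∈ Wf, ((If w).erase e₀).card := Finset.card_biUnion_le
      have husf : u ∉ insert v sf := by
        rw [Finset.mem_insert, hsf, Set.Finite.mem_toFinset]
        rintro (rfl | h)
        · exact hune rfl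
        · exact (hAuv u (hsA h)).1 rfl
      have hvsf : v ∉ sf := by
        rw [hsf, Set.Finite.mem_toFinset]
        intro h
        exact (hAuv v (hsA h)).2 rfl
      have he₀u : e₀ ∈ If u := by
        rw [hIf, Set.Finite.mem_toFinset, Set.mem_setOf_eq, huv]
        exact Sym2.mem_mk_left u v
      have he₀v : e₀ ∈ If v := by
        rw [hIf, Set.Finite.mem_toFinset, Set.mem_setOf_eq, huv]
        exact Sym2.mem_mk_right u v
      have h3 : ∑ w ∈ Wf, ((If w).erase e₀).card ≤ (r - 1) + ((r - 1) + s.ncard * r) := by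
        rw [hWf, Finset.sum_insert husf, Finset.sum_insert hvsf]
        have hu' : ((If u).erase e₀).card = r - 1 := by
          rw [Finset.card_erase_of_mem he₀u, hIfcard]
        have hv' : ((If v).erase e₀).card = r - 1 := by
          rw [Finset.card_erase_of_mem he₀v, hIfcard]
        have hs' : ∑ w ∈ sf, ((If w).erase e₀).card ≤ s.ncard * r := by
          calc ∑ w ∈ sf, ((If w).erase e₀).card ≤ ∑ w ∈ sf, (If w).card :=
                Finset.sum_le_sum (fun w _ => Finset.card_le_card (Finset.erase_subset _ _))
            _ = ∑ w ∈ sf, r := by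
                apply Finset.sum_congr rfl
                intro w _
                exact hIfcard w
            _ = sf.card * r := by rw [Finset.sum_const, smul_eq_mul]
            _ = s.ncard * r := by
                rw [hsf, ← Set.ncard_eq_toFinset_card _ (Set.toFinite _)]
        omega
      have hmul : (s.ncard + 2) * r ≤ (oddC GS (A \ s)).ncard * r :=
        Nat.mul_le_mul_right r hq2
      rw [Nat.add_mul] at hmul
      omega
    obtain ⟨M, hM, hMv⟩ := tutte_master GS A.ncard A rfl hTA
    set φ : Sym2 V → E := fun p => if h : ∃ e, ends e = p then h.choose else e₀ with hφdef
    have hφ : ∀ p, (∃ e, ends e = p) → ends (φ p) = p := by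
      intro p h
      rw [hφdef]
      simp only [dif_pos h]
      exact h.choose_spec
    refine ⟨insert e₀ (φ '' M.edgeSet), ?_, Set.mem_insert _ _⟩
    intro w
    by_cases hwA : w ∈ A
    · have hwM : w ∈ M.verts := by rw [hMv]; exact hwA
      obtain ⟨z, hz, hzuniq⟩ := hM hwM
      have hadj : GS.Adj w z := M.adj_sub hz
      have hex : ∃ e, ends e = s(w, z) := hadj.2
      have hpe : s(w, z) ∈ M.edgeSet := SimpleGraph.Subgraph.mem_edgeSet.mpr hz
      refine ⟨φ s(w, z), ⟨Set.mem_insert_iff.mpr (Or.inr ⟨_, hpe, rfl⟩), ?_⟩, ?_⟩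
      · rw [hφ _ hex]
        exact Sym2.mem_mk_left _ _
      · rintro e' ⟨he'mem, hwe'⟩
        rcases Set.mem_insert_iff.mp he'mem with rfl | ⟨p, hp, rfl⟩
        · exfalso
          rw [huv, Sym2.mem_iff] at hwe'
          rcases hwe' with h | h
          · exact (hAuv w hwA).1 h
          · exact (hAuv w hwA).2 h
        · obtain ⟨x, y, rfl⟩ : ∃ x y, p = s(x, y) :=
            Sym2.ind (fun x y => ⟨x, y, rfl⟩) p
          have hpadj : M.Adj x y := SimpleGraph.Subgraph.mem_edgeSet.mp hp
          have hpex : ∃ e, ends e = s(x, y) := (M.adj_sub hpadj).2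
          rw [hφ _ hpex, Sym2.mem_iff] at hwe'
          rcases hwe' with h | h
          · subst h
            exact congrArg φ (by rw [hzuniq y hpadj])
          · subst h
            exact congrArg φ (by rw [Sym2.eq_swap, hzuniq x hpadj.symm])
    · refine ⟨e₀, ⟨Set.mem_insert _ _, ?_⟩, ?_⟩
      · rw [huv, Sym2.mem_iff]
        rw [hA] at hwA
        simp only [Set.mem_diff, Set.mem_univ, true_and, Set.mem_insert_iff,
          Set.mem_singleton_iff] at hwA
        push_neg at hwA
        tauto
      · rintro e' ⟨he'mem, hwe'⟩
        rcases Set.mem_insert_iff.mp he'mem with rfl | ⟨p, hp, rfl⟩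
        · rfl
        · exfalso
          obtain ⟨x, y, rfl⟩ : ∃ x y, p = s(x, y) :=
            Sym2.ind (fun x y => ⟨x, y, rfl⟩) p
          have hpadj : M.Adj x y := SimpleGraph.Subgraph.mem_edgeSet.mp hp
          have hpex : ∃ e, ends e = s(x, y) := (M.adj_sub hpadj).2
          rw [hφ _ hpex, Sym2.mem_iff] at hwe'
          apply hwA
          rw [← hMv]
          rcases hwe' with h | h
          · subst h
            exact M.edge_vert hpadj
          · subst h
            exact M.edge_vert hpadj.symm
end

section
/- In a graph G with a solitary edge e, if M_e is the unique perfect matching containing e, then every M_e-alternating cycle contains e; consequently, if M is a perfect matching disjoint from M_e, then M ∪ M_e forms a Hamiltonian cycle of G. -/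
/-- Vertices connected by a walk using only edges from `C`. -/
def EdgeConn {V E : Type} (ends : E → Sym2 V) (C : Set E) : V → V → Prop :=
  Relation.ReflTransGen (fun u w => ∃ e ∈ C, ends e = s(u, w))

/-- Number of edges of `C` incident with `v`. -/
noncomputable def cdeg {V E : Type} (ends : E → Sym2 V) (C : Set E) (v : V) : ℕ :=
  {e | e ∈ C ∧ v ∈ ends e}.ncard

/-- `C` is the edge set of a single cycle: it is nonempty, every vertex is
incident with exactly `0` or `2` edges of `C`, and any two vertices of the
cycle are joined by a walk in `C`. -/
def IsCycle {V E : Type} (ends : E → Sym2 V) (C : Set E) : Prop :=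
  C.Nonempty ∧ (∀ v, cdeg ends C v = 0 ∨ cdeg ends C v = 2) ∧
    ∀ u w, cdeg ends C u = 2 → cdeg ends C w = 2 → EdgeConn ends C u w

/-- A cycle `C` is `M`-alternating (for a perfect matching `M`): on traversal
its edges alternate between `M` and its complement; equivalently, each vertex
of the cycle is incident with exactly one edge of `C ∩ M`. -/
def IsAlternating {V E : Type} (ends : E → Sym2 V) (M C : Set E) : Prop :=
  ∀ v, cdeg ends C v = 2 → cdeg ends (C ∩ M) v = 1

/-- A Hamiltonian cycle: a cycle through every vertex. -/
def IsHamCycle {V E : Type} (ends : E → Sym2 V) (C : Set E) : Prop :=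
  IsCycle ends C ∧ ∀ v : V, cdeg ends C v = 2

lemma two_mem' {α : Type*} {s : Set α} (h : s.ncard = 2) {a : α} (ha : a ∈ s) :
    ∃ b ∈ s, b ≠ a ∧ ∀ c ∈ s, c = a ∨ c = b := by
  obtain ⟨x, y, hxy, rfl⟩ := Set.ncard_eq_two.mp h
  simp only [Set.mem_insert_iff, Set.mem_singleton_iff] at ha ⊢
  rcases ha with rfl | rfl
  · exact ⟨y, Or.inr rfl, fun h' => hxy h'.symm, fun c hc => hc⟩
  · exact ⟨x, Or.inl rfl, hxy, fun c hc => hc.symm⟩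

lemma edgeConn_symm {V E : Type} {ends : E → Sym2 V} {C : Set E} {u w : V}
    (h : EdgeConn ends C u w) : EdgeConn ends C w u :=
  Std.Symm.symm (self := @Relation.ReflTransGen.symmetric _ _
    ⟨fun _ _ ⟨f, hf, hfe⟩ => ⟨f, hf, by rw [hfe, Sym2.eq_swap]⟩⟩) _ _ h

/-- If `e` is a solitary edge of a finite loopless multigraph `G` and `M_e` is the
unique perfect matching containing `e`, then every `M_e`-alternating cycle contains
`e`; consequently, if `M` is a perfect matching disjoint from `M_e`, then
`M ∪ M_e` is a Hamiltonian cycle of `G`. -/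
theorem stmt4 {V E : Type} [Fintype V] [Fintype E]
    (ends : E → Sym2 V) (hloop : ∀ e, ¬ (ends e).IsDiag)
    (e : E) (Me : Set E) (hMe : IsPM ends Me ∧ e ∈ Me)
    (huniq : ∀ M, IsPM ends M → e ∈ M → M = Me) :
    (∀ C, IsCycle ends C → IsAlternating ends Me C → e ∈ C) ∧
      (∀ M, IsPM ends M → Disjoint M Me → IsHamCycle ends (M ∪ Me)) := by
  obtain ⟨hPMe, heMe⟩ := hMe
  have part1 : ∀ C, IsCycle ends C → IsAlternating ends Me C → e ∈ C := by
    intro C hC hAlt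
    by_contra heC
    set M' := (Me \ C) ∪ (C \ Me) with hM'def
    -- key structure at a vertex of the cycle
    have hvert : ∀ v, cdeg ends C v = 2 →
        ∃ a b, (a ∈ C ∧ a ∈ Me ∧ v ∈ ends a) ∧ (b ∈ C ∧ b ∉ Me ∧ v ∈ ends b) ∧
          (∀ c, c ∈ C → v ∈ ends c → c = a ∨ c = b) := by
      intro v h2
      have h1 := hAlt v h2
      obtain ⟨a, ha⟩ := Set.ncard_eq_one.mp h1
      have haP : a ∈ C ∩ Me ∧ v ∈ ends a := by
        have : a ∈ {f | f ∈ C ∩ Me ∧ v ∈ ends f} := ha ▸ rfl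
        exact this
      obtain ⟨⟨haC, haMe⟩, hav⟩ := haP
      have haS : a ∈ {f | f ∈ C ∧ v ∈ ends f} := ⟨haC, hav⟩
      obtain ⟨b, hbS, hba, hall⟩ := two_mem' h2 haS
      obtain ⟨hbC, hbv⟩ := hbS
      have hbMe : b ∉ Me := by
        intro hb
        have : b ∈ {f | f ∈ C ∩ Me ∧ v ∈ ends f} := ⟨⟨hbC, hb⟩, hbv⟩
        rw [ha] at this
        exact hba this
      exact ⟨a, b, ⟨haC, haMe, hav⟩, ⟨hbC, hbMe, hbv⟩, fun c hc hcv => hall c ⟨hc, hcv⟩⟩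
    have hPM' : IsPM ends M' := by
      intro v
      rcases hC.2.1 v with h0 | h2
      · have hS : ∀ f, ¬ (f ∈ C ∧ v ∈ ends f) := by
          have := (Set.ncard_eq_zero (Set.toFinite _)).mp h0
          intro f hf
          exact Set.eq_empty_iff_forall_notMem.mp this f hf
        obtain ⟨m, ⟨hmMe, hmv⟩, hmu⟩ := hPMe v
        have hmC : m ∉ C := fun h => hS m ⟨h, hmv⟩
        refine ⟨m, ⟨Or.inl ⟨hmMe, hmC⟩, hmv⟩, ?_⟩
        rintro f ⟨hf | hf, hfv⟩
        · exact hmu f ⟨hf.1, hfv⟩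
        · exact absurd ⟨hf.1, hfv⟩ (hS f)
      · obtain ⟨a, b, ⟨haC, haMe, hav⟩, ⟨hbC, hbMe, hbv⟩, hall⟩ := hvert v h2
        obtain ⟨m, ⟨hmMe, hmv⟩, hmu⟩ := hPMe v
        have hma : m = a := (hmu a ⟨haMe, hav⟩).symm ▸ rfl
        refine ⟨b, ⟨Or.inr ⟨hbC, hbMe⟩, hbv⟩, ?_⟩
        rintro f ⟨hf | hf, hfv⟩
        · exfalso
          have : f = m := hmu f ⟨hf.1, hfv⟩
          rw [this, ← hmu a ⟨haMe, hav⟩] at hf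
          exact hf.2 haC
        · rcases hall f hf.1 hfv with rfl | rfl
          · exact absurd haMe hf.2
          · rfl
    have heM' : e ∈ M' := Or.inl ⟨heMe, heC⟩
    have hEq := huniq M' hPM' heM'
    obtain ⟨f0, hf0⟩ := hC.1
    obtain ⟨v0, hv0⟩ : ∃ v, v ∈ ends f0 := ⟨(ends f0).out.1, Sym2.out_fst_mem _⟩
    have h2 : cdeg ends C v0 = 2 := by
      rcases hC.2.1 v0 with h0 | h2
      · exfalso
        have := (Set.ncard_eq_zero (Set.toFinite _)).mp h0
        exact Set.eq_empty_iff_forall_notMem.mp this f0 ⟨hf0, hv0⟩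
      · exact h2
    obtain ⟨a, b, _, ⟨hbC, hbMe, hbv⟩, _⟩ := hvert v0 h2
    have : b ∈ Me := hEq ▸ (Or.inr ⟨hbC, hbMe⟩ : b ∈ M')
    exact hbMe this
  refine ⟨part1, ?_⟩
  intro M hPM hdisj
  have hdeg : ∀ v, cdeg ends (M ∪ Me) v = 2 := by
    intro v
    obtain ⟨m, ⟨hmM, hmv⟩, hmu⟩ := hPM v
    obtain ⟨n, ⟨hnMe, hnv⟩, hnu⟩ := hPMe v
    have hmn : m ≠ n := fun h => (Set.disjoint_left.mp hdisj hmM) (h ▸ hnMe)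
    have hset : {f | f ∈ M ∪ Me ∧ v ∈ ends f} = {m, n} := by
      ext f
      simp only [Set.mem_setOf_eq, Set.mem_insert_iff, Set.mem_singleton_iff]
      constructor
      · rintro ⟨hf | hf, hfv⟩
        · exact Or.inl (hmu f ⟨hf, hfv⟩)
        · exact Or.inr (hnu f ⟨hf, hfv⟩)
      · rintro (rfl | rfl)
        · exact ⟨Or.inl hmM, hmv⟩
        · exact ⟨Or.inr hnMe, hnv⟩
    rw [cdeg, hset, Set.ncard_pair hmn]
  -- component of v in M ∪ Me
  have hcomp : ∀ v : V, ∃ x, x ∈ ends e ∧ EdgeConn ends (M ∪ Me) v x := by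
    intro v
    set R : V → Prop := fun u => EdgeConn ends (M ∪ Me) v u with hRdef
    set Cv : Set E := {f | f ∈ M ∪ Me ∧ ∃ u, u ∈ ends f ∧ R u} with hCvdef
    have hCvsub : Cv ⊆ M ∪ Me := fun f hf => hf.1
    -- (i) all endpoints of an edge of Cv are reachable
    have hreach : ∀ f ∈ Cv, ∀ w, w ∈ ends f → R w := by
      rintro f ⟨hfMM, u, hu, hRu⟩ w hw
      by_cases huw : u = w
      · exact huw ▸ hRu
      · have hends : ends f = s(u, w) := (Sym2.mem_and_mem_iff huw).mp ⟨hu, hw⟩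
        exact hRu.tail ⟨f, hfMM, hends⟩
    -- (ii) any M∪Me-edge at a reachable vertex is in Cv
    have hmem : ∀ u, R u → ∀ f ∈ M ∪ Me, u ∈ ends f → f ∈ Cv :=
      fun u hRu f hf hu => ⟨hf, u, hu, hRu⟩
    -- (iii) walks from v stay in Cv
    have hwalk : ∀ w, R w → EdgeConn ends Cv v w := by
      intro w hRw
      induction hRw with
      | refl => exact Relation.ReflTransGen.refl
      | tail h step ih =>
          obtain ⟨f, hf, hfe⟩ := step
          refine ih.tail ⟨f, hmem _ h f hf ?_, hfe⟩
          rw [hfe]; exact Sym2.mem_mk_left _ _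
    -- degrees within Cv
    have hdegCv : ∀ w, R w → {f | f ∈ Cv ∧ w ∈ ends f} = {f | f ∈ M ∪ Me ∧ w ∈ ends f} := by
      intro w hRw
      ext f
      exact ⟨fun ⟨hf, hw⟩ => ⟨hCvsub hf, hw⟩, fun ⟨hf, hw⟩ => ⟨hmem w hRw f hf hw, hw⟩⟩
    have hdegCv0 : ∀ w, ¬ R w → {f | f ∈ Cv ∧ w ∈ ends f} = ∅ := by
      intro w hRw
      ext f
      simp only [Set.mem_setOf_eq, Set.mem_empty_iff_false, iff_false]
      rintro ⟨hf, hw⟩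
      exact hRw (hreach f hf w hw)
    have hR_of_deg2 : ∀ w, cdeg ends Cv w = 2 → R w := by
      intro w h2
      by_contra hRw
      rw [cdeg, hdegCv0 w hRw, Set.ncard_empty] at h2
      exact two_ne_zero h2.symm
    have hcyc : IsCycle ends Cv := by
      refine ⟨?_, ?_, ?_⟩
      · obtain ⟨m, ⟨hmM, hmv⟩, _⟩ := hPM v
        exact ⟨m, Or.inl hmM, v, hmv, Relation.ReflTransGen.refl⟩
      · intro w
        by_cases hRw : R w
        · right; rw [cdeg, hdegCv w hRw]; exact hdeg w
        · left; rw [cdeg, hdegCv0 w hRw, Set.ncard_empty]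
      · intro u w hu hw
        exact (edgeConn_symm (hwalk u (hR_of_deg2 u hu))).trans (hwalk w (hR_of_deg2 w hw))
    have halt : IsAlternating ends Me Cv := by
      intro w h2
      have hRw := hR_of_deg2 w h2
      obtain ⟨n, ⟨hnMe, hnv⟩, hnu⟩ := hPMe w
      have : {f | f ∈ Cv ∩ Me ∧ w ∈ ends f} = {n} := by
        ext f
        simp only [Set.mem_setOf_eq, Set.mem_singleton_iff, Set.mem_inter_iff]
        constructor
        · rintro ⟨⟨_, hfMe⟩, hfw⟩
          exact hnu f ⟨hfMe, hfw⟩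
        · intro hfn
          rw [hfn]
          exact ⟨⟨hmem w hRw n (Or.inr hnMe) hnv, hnMe⟩, hnv⟩
      rw [cdeg, this, Set.ncard_singleton]
    have heCv := part1 Cv hcyc halt
    obtain ⟨_, x, hx, hRx⟩ := heCv
    exact ⟨x, hx, hRx⟩
  refine ⟨⟨⟨e, Or.inr heMe⟩, fun v => Or.inr (hdeg v), ?_⟩, hdeg⟩
  intro u w _ _
  obtain ⟨x, hx, hux⟩ := hcomp u
  obtain ⟨y, hy, hwy⟩ := hcomp w
  have hxy : EdgeConn ends (M ∪ Me) x y := by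
    by_cases h : x = y
    · exact h ▸ Relation.ReflTransGen.refl
    · exact Relation.ReflTransGen.single ⟨e, Or.inr heMe, (Sym2.mem_and_mem_iff h).mp ⟨hx, hy⟩⟩
  exact (hux.trans hxy).trans (edgeConn_symm hwy)
end

section
/- Each solitary equivalence class S of a matching covered graph G is contained in exactly one perfect matching; moreover, any perfect matching of G contains at most one solitary class, so any two distinct solitary classes are mutually exclusive. -/
/-- A matching covered graph: connected, of order at least two, and every edge
lies in some perfect matching. -/
def IsMC {V E : Type} (ends : E → Sym2 V) : Prop :=
  (toSimple ends).Connected ∧ 2 ≤ Nat.card V ∧ ∀ e, ∃ M, IsPM ends M ∧ e ∈ M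

/-- Edge `e` depends on edge `f`: every perfect matching containing `e` also
contains `f`. -/
def Dep {V E : Type} (ends : E → Sym2 V) (e f : E) : Prop :=
  ∀ M, IsPM ends M → e ∈ M → f ∈ M

/-- Edges `e` and `f` are mutually dependent. -/
def MutDep {V E : Type} (ends : E → Sym2 V) (e f : E) : Prop :=
  Dep ends e f ∧ Dep ends f e

/-- A solitary edge: it lies in exactly one perfect matching. -/
def Solitary {V E : Type} (ends : E → Sym2 V) (e : E) : Prop :=
  ∃! M, IsPM ends M ∧ e ∈ M

/-- In a matching covered graph: each solitary class is contained in exactly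
one perfect matching; moreover, any perfect matching contains at most one
solitary class (so any two distinct solitary classes are mutually exclusive). -/
theorem stmt8 {V E : Type} [Fintype V] [Fintype E]
    (ends : E → Sym2 V) (hG : IsMC ends) :
    (∀ e, Solitary ends e → ∃! M, IsPM ends M ∧ {f | MutDep ends e f} ⊆ M) ∧
      (∀ M, IsPM ends M → ∀ e₁ e₂, Solitary ends e₁ → Solitary ends e₂ →
        {f | MutDep ends e₁ f} ⊆ M → {f | MutDep ends e₂ f} ⊆ M →
        {f | MutDep ends e₁ f} = {f | MutDep ends e₂ f}) := by
  have refl : ∀ e, MutDep ends e e := fun e => ⟨fun _ _ h => h, fun _ _ h => h⟩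
  constructor
  · rintro e ⟨M, ⟨hM, heM⟩, huniq⟩
    refine ⟨M, ⟨hM, fun f hf => hf.1 M hM heM⟩, ?_⟩
    rintro M' ⟨hM', hsub⟩
    exact huniq M' ⟨hM', hsub (refl e)⟩
  · intro M hM e₁ e₂ hs₁ hs₂ h₁ h₂
    have he₁ : e₁ ∈ M := h₁ (refl e₁)
    have he₂ : e₂ ∈ M := h₂ (refl e₂)
    obtain ⟨M₁, hM₁, hu₁⟩ := hs₁
    obtain ⟨M₂, hM₂, hu₂⟩ := hs₂
    have hMeq₁ : M = M₁ := hu₁ M ⟨hM, he₁⟩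
    have hMeq₂ : M = M₂ := hu₂ M ⟨hM, he₂⟩
    have hmd : MutDep ends e₁ e₂ := by
      constructor
      · intro N hN he₁N
        have : N = M := (hu₁ N ⟨hN, he₁N⟩).trans hMeq₁.symm
        exact this ▸ he₂
      · intro N hN he₂N
        have : N = M := (hu₂ N ⟨hN, he₂N⟩).trans hMeq₂.symm
        exact this ▸ he₁
    ext f
    constructor
    · rintro ⟨d₁, d₂⟩
      exact ⟨fun N hN h => d₁ N hN (hmd.2 N hN h), fun N hN h => hmd.1 N hN (d₂ N hN h)⟩
    · rintro ⟨d₁, d₂⟩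
      exact ⟨fun N hN h => d₁ N hN (hmd.1 N hN h), fun N hN h => hmd.2 N hN (d₂ N hN h)⟩
end

section
/- Every connected r-regular graph admitting a proper r-edge-coloring has at most r solitary equivalence classes. -/
/-- A proper edge coloring: edges sharing a vertex get different colors. -/
def Proper {V E : Type} (ends : E → Sym2 V) {r : ℕ} (c : E → Fin r) : Prop :=
  ∀ e f, e ≠ f → (∃ v, v ∈ ends e ∧ v ∈ ends f) → c e ≠ c f

/-- Every connected `r`-regular multigraph admitting a proper `r`-edge-coloring
has at most `r` solitary equivalence classes. -/
theorem stmt9 {V E : Type} [Fintype V] [Fintype E]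
    (ends : E → Sym2 V) (r : ℕ)
    (hconn : (toSimple ends).Connected) (hreg : ∀ v, deg ends v = r)
    (c : E → Fin r) (hc : Proper ends c) :
    {S : Set E | ∃ e, Solitary ends e ∧ S = {f | MutDep ends e f}}.ncard ≤ r := by
  classical
  -- each color class is a perfect matching
  have hCC : ∀ i : Fin r, IsPM ends {f | c f = i} := by
    intro i v
    have huniq : ∀ f f', (c f = i ∧ v ∈ ends f) → (c f' = i ∧ v ∈ ends f') → f = f' := by
      rintro f f' ⟨h1, h2⟩ ⟨h3, h4⟩
      by_contra hne
      exact hc f f' hne ⟨v, h2, h4⟩ (h1.trans h3.symm)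
    have hex : ∃ f, c f = i ∧ v ∈ ends f := by
      set s : Finset E := Finset.univ.filter (fun e => v ∈ ends e) with hs
      have hcard : s.card = r := by
        have hd := hreg v
        rw [deg, Set.ncard_eq_toFinset_card'] at hd
        rw [← hd]
        congr 1
        ext e; simp [hs]
      have hinj : Set.InjOn c s := by
        intro a ha b hb hab
        by_contra hne
        exact hc a b hne
          ⟨v, by simpa [hs] using ha, by simpa [hs] using hb⟩ hab
      have himg : (s.image c).card = r := by
        rw [Finset.card_image_of_injOn hinj, hcard]
      have huniv : s.image c = Finset.univ :=
        Finset.eq_univ_of_card _ (by simp [himg])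
      have hi : i ∈ s.image c := huniv ▸ Finset.mem_univ i
      obtain ⟨e, he, hce⟩ := Finset.mem_image.mp hi
      exact ⟨e, hce, by simpa [hs] using he⟩
    obtain ⟨f, hf⟩ := hex
    exact ⟨f, hf, fun f' hf' => huniq f' f hf' hf⟩
  -- for a solitary edge, any PM containing it is its color class
  have hsolM : ∀ e, Solitary ends e → ∀ M, IsPM ends M → e ∈ M →
      M = {f | c f = c e} := by
    intro e he M hM heM
    obtain ⟨N, _, hNu⟩ := he
    have h1 := hNu M ⟨hM, heM⟩
    have h2 := hNu {f | c f = c e} ⟨hCC (c e), rfl⟩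
    rw [h1, h2]
  -- solitary edges of the same color are mutually dependent
  have hmut : ∀ e e', Solitary ends e → Solitary ends e' → c e = c e' →
      MutDep ends e e' := by
    intro e e' he he' hcc
    constructor
    · intro M hM heM
      rw [hsolM e he M hM heM]
      exact hcc.symm
    · intro M hM heM
      rw [hsolM e' he' M hM heM]
      exact hcc
  -- mutually dependent edges have the same class
  have hclass : ∀ e e', MutDep ends e e' →
      {f | MutDep ends e f} = {f | MutDep ends e' f} := by
    rintro e e' ⟨h1, h2⟩
    ext f
    simp only [Set.mem_setOf_eq, MutDep]
    constructor
    · rintro ⟨a, b⟩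
      exact ⟨fun M hM hm => a M hM (h2 M hM hm),
             fun M hM hm => h1 M hM (b M hM hm)⟩
    · rintro ⟨a, b⟩
      exact ⟨fun M hM hm => a M hM (h1 M hM hm),
             fun M hM hm => h2 M hM (b M hM hm)⟩
  rcases Nat.eq_zero_or_pos r with hr | hr
  · subst hr
    have hempty : {S : Set E | ∃ e, Solitary ends e ∧ S = {f | MutDep ends e f}} = ∅ := by
      rw [Set.eq_empty_iff_forall_notMem]
      rintro S ⟨e, -, -⟩
      exact (c e).elim0
    simp [hempty]
  · have hne : Nonempty (Fin r) := ⟨⟨0, hr⟩⟩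
    set 𝒮 := {S : Set E | ∃ e, Solitary ends e ∧ S = {f | MutDep ends e f}} with h𝒮
    set F : Set E → Fin r := fun S =>
      if h : S ∈ 𝒮 then c h.choose else Classical.arbitrary _ with hF
    have hFinj : Set.InjOn F 𝒮 := by
      intro S hS S' hS' hFF
      simp only [hF, dif_pos hS, dif_pos hS'] at hFF
      obtain ⟨hsol, hSeq⟩ := hS.choose_spec
      obtain ⟨hsol', hSeq'⟩ := hS'.choose_spec
      rw [hSeq, hSeq']
      exact hclass _ _ (hmut _ _ hsol hsol' hFF)
    calc 𝒮.ncard ≤ (Set.univ : Set (Fin r)).ncard :=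
          Set.ncard_le_ncard_of_injOn F (fun _ _ => Set.mem_univ _) hFinj Set.finite_univ
      _ = r := by simp [Set.ncard_univ]
end

section
/- Every connected r-edge-colorable r-regular graph with at least r−1 solitary classes is uniquely r-edge-colorable (its proper r-edge-coloring is unique up to permutation of colors). -/
/-- In an `r`-regular multigraph, each color class of a proper `r`-edge-coloring
is a perfect matching. -/
lemma colorClassPM {V E : Type} [Fintype V] [Fintype E]
    (ends : E → Sym2 V) {r : ℕ} (hreg : ∀ v, deg ends v = r)
    {c : E → Fin r} (hc : Proper ends c) (i : Fin r) :
    IsPM ends {e | c e = i} := by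
  intro v
  have hinj : Set.InjOn c {e | v ∈ ends e} := by
    intro e he f hf hef
    by_contra hne
    exact hc e f hne ⟨v, he, hf⟩ hef
  have himg : c '' {e | v ∈ ends e} = Set.univ := by
    apply Set.eq_of_subset_of_ncard_le (Set.subset_univ _) ?_ Set.finite_univ
    rw [Set.ncard_image_of_injOn hinj, Set.ncard_univ, Nat.card_eq_fintype_card,
      Fintype.card_fin]
    exact (hreg v).ge
  have : i ∈ c '' {e | v ∈ ends e} := himg ▸ Set.mem_univ i
  obtain ⟨e, he, hce⟩ := this
  exact ⟨e, ⟨hce, he⟩, fun f ⟨hf1, hf2⟩ => hinj hf2 he (hf1.trans hce.symm)⟩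

/-- For a solitary edge, any color class containing it is its unique perfect
matching. -/
lemma solitary_colorClass {V E : Type} [Fintype V] [Fintype E]
    (ends : E → Sym2 V) {r : ℕ} (hreg : ∀ v, deg ends v = r)
    {c : E → Fin r} (hc : Proper ends c) {e : E} (hsol : Solitary ends e)
    {M : Set E} (hM : IsPM ends M ∧ e ∈ M) :
    {f | c f = c e} = M := by
  obtain ⟨N, hN, hNuniq⟩ := hsol
  have h1 : {f | c f = c e} = N :=
    hNuniq _ ⟨colorClassPM ends hreg hc (c e), rfl⟩
  have h2 : M = N := hNuniq _ hM
  rw [h1, h2]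

/-- If two solitary edges lie in the same perfect matching (necessarily the
unique one for each), their mutual dependence classes coincide. -/
lemma mutDep_class_eq {V E : Type} (ends : E → Sym2 V) {e e' : E}
    (he : Solitary ends e) (he' : Solitary ends e')
    {M : Set E} (hM : IsPM ends M) (heM : e ∈ M) (he'M : e' ∈ M) :
    {f | MutDep ends e f} = {f | MutDep ends e' f} := by
  obtain ⟨N, hN, hNuniq⟩ := he
  obtain ⟨N', hN', hN'uniq⟩ := he'
  have hMN : M = N := hNuniq _ ⟨hM, heM⟩
  have hMN' : M = N' := hN'uniq _ ⟨hM, he'M⟩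
  have hdep : Dep ends e e' := by
    intro P hP heP
    have : M = P := hMN.trans (hNuniq _ ⟨hP, heP⟩).symm
    exact this ▸ he'M
  have hdep' : Dep ends e' e := by
    intro P hP heP
    have : M = P := hMN'.trans (hN'uniq _ ⟨hP, heP⟩).symm
    exact this ▸ heM
  ext g
  constructor
  · rintro ⟨h1, h2⟩
    exact ⟨fun P hP hgP => h1 P hP (hdep' P hP hgP),
      fun P hP hgP => hdep P hP (h2 P hP hgP)⟩
  · rintro ⟨h1, h2⟩
    exact ⟨fun P hP hgP => h1 P hP (hdep P hP hgP),
      fun P hP hgP => hdep' P hP (h2 P hP hgP)⟩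

/-- Every connected `r`-edge-colorable `r`-regular multigraph with at least
`r − 1` solitary classes is uniquely `r`-edge-colorable: any two proper
`r`-edge-colorings agree up to a permutation of the colors. -/
theorem stmt10 {V E : Type} [Fintype V] [Fintype E]
    (ends : E → Sym2 V) (r : ℕ)
    (hconn : (toSimple ends).Connected) (hreg : ∀ v, deg ends v = r)
    (hcol : ∃ c : E → Fin r, Proper ends c)
    (hclasses : r - 1 ≤
      {S : Set E | ∃ e, Solitary ends e ∧ S = {f | MutDep ends e f}}.ncard) :
    ∀ c₁ c₂ : E → Fin r, Proper ends c₁ → Proper ends c₂ →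
      ∃ σ : Equiv.Perm (Fin r), ∀ e, c₂ e = σ (c₁ e) := by
  intro c₁ c₂ h₁ h₂
  classical
  rcases isEmpty_or_nonempty E with hE | hE
  · exact ⟨1, fun e => (IsEmpty.false e).elim⟩
  set 𝒮 := {S : Set E | ∃ e, Solitary ends e ∧ S = {f | MutDep ends e f}} with h𝒮
  -- choose a solitary representative of each class
  have hrep : ∀ S : Set E, ∃ e, S ∈ 𝒮 →
      Solitary ends e ∧ S = {f | MutDep ends e f} := by
    intro S
    by_cases hS : S ∈ 𝒮
    · obtain ⟨e, he⟩ := hS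
      exact ⟨e, fun _ => he⟩
    · exact ⟨Classical.arbitrary E, fun h => absurd h hS⟩
  choose φ hφ using hrep
  have hφsol : ∀ S ∈ 𝒮, Solitary ends (φ S) := fun S hS => (hφ S hS).1
  have hφcls : ∀ S ∈ 𝒮, S = {f | MutDep ends (φ S) f} := fun S hS => (hφ S hS).2
  -- For a solitary edge, its color classes in both colorings agree.
  have hsolcls : ∀ e, Solitary ends e →
      {f | c₁ f = c₁ e} = {f | c₂ f = c₂ e} := by
    intro e he
    obtain ⟨M, hM, -⟩ := id he
    rw [solitary_colorClass ends hreg h₁ he hM,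
      solitary_colorClass ends hreg h₂ he hM]
  -- the sets of "good" colors for each coloring
  set A := {i : Fin r | ∃ e, c₁ e = i ∧ {f | c₁ f = c₁ e} = {f | c₂ f = c₂ e}}
    with hAdef
  set B := {j : Fin r | ∃ e, c₂ e = j ∧ {f | c₁ f = c₁ e} = {f | c₂ f = c₂ e}}
    with hBdef
  -- the class-to-color maps are injective on 𝒮
  have hkey : ∀ (c : E → Fin r), Proper ends c → Set.InjOn (fun S => c (φ S)) 𝒮 := by
    intro c hc S hS S' hS' hcc
    have he := hφsol S hS
    have he' := hφsol S' hS'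
    obtain ⟨M, hM⟩ := he.exists
    have hcls : {f | c f = c (φ S)} = M :=
      solitary_colorClass ends hreg hc he hM
    have he'mem : φ S' ∈ M := by
      rw [← hcls]; exact hcc.symm
    rw [hφcls S hS, hφcls S' hS']
    exact mutDep_class_eq ends he he' hM.1 hM.2 he'mem
  have hAcard : r - 1 ≤ A.ncard := by
    have hsub : (fun S => c₁ (φ S)) '' 𝒮 ⊆ A := by
      rintro i ⟨S, hS, rfl⟩
      exact ⟨φ S, rfl, hsolcls _ (hφsol S hS)⟩
    calc r - 1 ≤ 𝒮.ncard := hclasses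
      _ = ((fun S => c₁ (φ S)) '' 𝒮).ncard :=
          (Set.ncard_image_of_injOn (hkey c₁ h₁)).symm
      _ ≤ A.ncard := Set.ncard_le_ncard hsub A.toFinite
  have hBcard : r - 1 ≤ B.ncard := by
    have hsub : (fun S => c₂ (φ S)) '' 𝒮 ⊆ B := by
      rintro j ⟨S, hS, rfl⟩
      exact ⟨φ S, rfl, hsolcls _ (hφsol S hS)⟩
    calc r - 1 ≤ 𝒮.ncard := hclasses
      _ = ((fun S => c₂ (φ S)) '' 𝒮).ncard :=
          (Set.ncard_image_of_injOn (hkey c₂ h₂)).symm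
      _ ≤ B.ncard := Set.ncard_le_ncard hsub B.toFinite
  -- a set of colors of size ≥ r - 1 misses at most one color
  have hcompl : ∀ s : Set (Fin r), r - 1 ≤ s.ncard →
      ∀ i j, i ∉ s → j ∉ s → i = j := by
    intro s hs i j hi hj
    by_contra hne
    have hsum : s.ncard + sᶜ.ncard = r := by
      rw [Set.ncard_add_ncard_compl, Nat.card_eq_fintype_card, Fintype.card_fin]
    have hsle : s.ncard ≤ r := le_trans (Nat.le_add_right _ _) hsum.le
    have hpair : ({i, j} : Set (Fin r)) ⊆ sᶜ := by
      rintro x (rfl | rfl) <;> assumption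
    have h2 : 2 ≤ sᶜ.ncard := by
      rw [← Set.ncard_pair hne]
      exact Set.ncard_le_ncard hpair (sᶜ).toFinite
    omega
  -- main claim: the two colorings induce the same partition
  have hmain : ∀ e f, c₁ e = c₁ f → c₂ e = c₂ f := by
    intro e f hef
    by_cases hA' : c₁ e ∈ A
    · obtain ⟨e₀, he₀, hcls⟩ := hA'
      have h1 : c₂ e = c₂ e₀ := by
        have : e ∈ {g | c₁ g = c₁ e₀} := he₀.symm
        rw [hcls] at this; exact this
      have h2 : c₂ f = c₂ e₀ := by
        have : f ∈ {g | c₁ g = c₁ e₀} := (hef ▸ he₀).symm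
        rw [hcls] at this; exact this
      rw [h1, h2]
    · have hf' : c₁ f ∉ A := hef ▸ hA'
      have hBe : c₂ e ∉ B := by
        rintro ⟨e₀, he₀, hcls⟩
        apply hA'
        have : e ∈ {g | c₂ g = c₂ e₀} := he₀.symm
        rw [← hcls] at this
        exact ⟨e₀, this.symm, hcls⟩
      have hBf : c₂ f ∉ B := by
        rintro ⟨e₀, he₀, hcls⟩
        apply hf'
        have : f ∈ {g | c₂ g = c₂ e₀} := he₀.symm
        rw [← hcls] at this
        exact ⟨e₀, this.symm, hcls⟩
      exact hcompl B hBcard _ _ hBe hBf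
  -- both colorings are surjective
  have hsurj : ∀ (c : E → Fin r), Proper ends c → Function.Surjective c := by
    intro c hc i
    obtain ⟨v⟩ := hconn.nonempty
    obtain ⟨e, ⟨hce, -⟩, -⟩ := colorClassPM ends hreg hc i v
    exact ⟨e, hce⟩
  have hs1 := hsurj c₁ h₁
  have hs2 := hsurj c₂ h₂
  set g : Fin r → Fin r := fun i => c₂ (Function.surjInv hs1 i) with hg
  have hge : ∀ e, g (c₁ e) = c₂ e :=
    fun e => hmain _ _ (Function.surjInv_eq hs1 (c₁ e))
  have hgsurj : Function.Surjective g := by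
    intro j
    obtain ⟨e, rfl⟩ := hs2 j
    exact ⟨c₁ e, hge e⟩
  have hgbij : Function.Bijective g :=
    Finite.surjective_iff_bijective.mp hgsurj
  exact ⟨Equiv.ofBijective g hgbij, fun e => (hge e).symm⟩
end

section
/- For an r-graph G with a 2-edge-cut C, both marked C-components of G are also r-graphs (for the same r). -/
noncomputable section
open scoped Classical

/-- Push a vertex of `X` into the subtype `↥X` (default `a` off `X`). -/
noncomputable def restrVert {V : Type} (X : Set V) (a : ↥X) (v : V) : ↥X :=
  if h : v ∈ X then ⟨v, h⟩ else a

/-- The marked `C`-component of a multigraph on the shore `X`: its vertices are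
those of `X`, its edges are the edges with both ends in `X` together with one
extra marker edge joining `a` and `b` (the ends in `X` of the two cut edges). -/
noncomputable def markedEnds {V E : Type} (ends : E → Sym2 V) (X : Set V)
    (a b : ↥X) : ({e : E // ∀ v ∈ ends e, v ∈ X} ⊕ Unit) → Sym2 ↥X
  | Sum.inl e => (ends e.val).map (restrVert X a)
  | Sum.inr _ => s(a, b)

private lemma sym2_exists_pair {V : Type} (z : Sym2 V) : ∃ p q, z = s(p, q) :=
  Sym2.ind (fun p q => ⟨p, q, rfl⟩) z

private lemma cut_compl {V E : Type} (ends : E → Sym2 V) (X : Set V) :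
    Cut ends Xᶜ = Cut ends X := by
  ext e
  constructor
  · rintro ⟨u, hu, w, hw, h⟩
    exact ⟨w, not_not.mp hw, u, hu, by rw [h]; exact Sym2.eq_swap⟩
  · rintro ⟨u, hu, w, hw, h⟩
    exact ⟨w, hw, u, not_not.mpr hu, by rw [h]; exact Sym2.eq_swap⟩

private lemma key {V E : Type} [Fintype V] [Fintype E]
    (ends : E → Sym2 V) (r : ℕ) (hr : 3 ≤ r) (hG : IsRGraph r ends)
    (X : Set V) (f f' : E) (hff : f ≠ f') (hC : Cut ends X = {f, f'})
    (u₁ u₂ v₁ v₂ : V) (hu₁ : u₁ ∈ X) (hu₂ : u₂ ∉ X) (hv₁ : v₁ ∈ X) (hv₂ : v₂ ∉ X)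
    (hf : ends f = s(u₁, u₂)) (hf' : ends f' = s(v₁, v₂)) :
    IsRGraph r (markedEnds ends X ⟨u₁, hu₁⟩ ⟨v₁, hv₁⟩) := by
  obtain ⟨hloops, hconn, hdeg, hcut⟩ := hG
  set a : ↥X := ⟨u₁, hu₁⟩ with ha
  set b : ↥X := ⟨v₁, hv₁⟩ with hb
  set M := markedEnds ends X a b with hM
  -- classification of crossing edges
  have hcross : ∀ e p q, ends e = s(p, q) → p ∈ X → q ∉ X →
      (e = f ∧ p = u₁ ∧ q = u₂) ∨ (e = f' ∧ p = v₁ ∧ q = v₂) := by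
    intro e p q h hp hq
    have he : e ∈ Cut ends X := ⟨p, hp, q, hq, h⟩
    rw [hC] at he
    rcases he with rfl | rfl
    · left
      rcases Sym2.eq_iff.mp (h.symm.trans hf) with ⟨h1, h2⟩ | ⟨h1, h2⟩
      · exact ⟨rfl, h1, h2⟩
      · exact absurd (h1 ▸ hp) hu₂
    · right
      rcases Sym2.eq_iff.mp (h.symm.trans hf') with ⟨h1, h2⟩ | ⟨h1, h2⟩
      · exact ⟨rfl, h1, h2⟩
      · exact absurd (h1 ▸ hp) hv₂
  -- parity of the shores
  have hevenX : Even X.ncard := by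
    by_contra hodd
    have h1 := hcut X (Nat.not_even_iff_odd.mp hodd)
    rw [hC, Set.ncard_pair hff] at h1
    omega
  -- the two ends in X are distinct
  have huv : u₁ ≠ v₁ := by
    intro h
    have hYodd : Odd (X \ {u₁}).ncard := by
      have h1 : (X \ {u₁}).ncard = X.ncard - 1 := Set.ncard_diff_singleton_of_mem hu₁
      have h2 : 0 < X.ncard := (Set.ncard_pos (Set.toFinite X)).mpr ⟨u₁, hu₁⟩
      obtain ⟨k, hk⟩ := hevenX
      rw [Nat.odd_iff]; omega
    have hsub : Cut ends (X \ {u₁}) ⊆ {e | u₁ ∈ ends e} \ {f, f'} := by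
      rintro e ⟨p, hp, q, hq, he⟩
      have hpX : p ∈ X := hp.1
      have hpu : p ≠ u₁ := fun hh => hp.2 hh
      by_cases hqX : q ∈ X
      · have hqu : q = u₁ := by
          by_contra hqu
          exact hq ⟨hqX, hqu⟩
        constructor
        · show u₁ ∈ ends e
          rw [he, ← hqu]
          exact Sym2.mem_mk_right _ _
        · rintro (rfl | rfl)
          · rcases Sym2.eq_iff.mp (hf.symm.trans he) with ⟨h1, h2⟩ | ⟨h1, h2⟩
            · exact hpu h1.symm
            · exact hu₂ (h2.symm ▸ hpX)
          · rcases Sym2.eq_iff.mp (hf'.symm.trans he) with ⟨h1, h2⟩ | ⟨h1, h2⟩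
            · exact hpu (h1.symm.trans h.symm)
            · exact hv₂ (h2.symm ▸ hpX)
      · rcases hcross e p q he hpX hqX with ⟨-, h1, -⟩ | ⟨-, h1, -⟩
        · exact absurd h1 hpu
        · exact absurd (h1.trans h.symm) hpu
    have hmem : ({f, f'} : Set E) ⊆ {e | u₁ ∈ ends e} := by
      rintro e (rfl | rfl)
      · rw [Set.mem_setOf_eq, hf]
        exact Sym2.mem_mk_left _ _
      · rw [Set.mem_setOf_eq, hf', Sym2.mem_iff]
        exact Or.inl h
    have h2 : (Cut ends (X \ {u₁})).ncard ≤ r - 2 := by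
      refine le_trans (Set.ncard_le_ncard hsub (Set.toFinite _)) ?_
      rw [Set.ncard_diff hmem, Set.ncard_pair hff]
      exact tsub_le_tsub_right (hdeg u₁).le 2
    have h3 := hcut _ hYodd
    omega
  have hab : a ≠ b := fun h => huv (congrArg Subtype.val h)
  -- membership in mapped edges
  have hmemInl : ∀ (e : {e : E // ∀ v ∈ ends e, v ∈ X}) (x : ↥X),
      x ∈ M (Sum.inl e) ↔ (x : V) ∈ ends e.val := by
    intro e x
    show x ∈ (ends e.val).map (restrVert X a) ↔ _
    rw [Sym2.mem_map]
    constructor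
    · rintro ⟨y, hy, hyx⟩
      have hyX := e.prop y hy
      rw [restrVert, dif_pos hyX] at hyx
      have : y = (x : V) := congrArg Subtype.val hyx
      exact this ▸ hy
    · intro h
      exact ⟨(x : V), h, by rw [restrVert, dif_pos x.2]⟩
  -- loopless
  have hloopM : ∀ e', ¬ (M e').IsDiag := by
    rintro (e | t)
    · obtain ⟨p, q, hpq⟩ := sym2_exists_pair (ends e.val)
      have hp : p ∈ X := e.prop p (hpq ▸ Sym2.mem_mk_left _ _)
      have hq : q ∈ X := e.prop q (hpq ▸ Sym2.mem_mk_right _ _)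
      have h1 : M (Sum.inl e) = s(restrVert X a p, restrVert X a q) := by
        show (ends e.val).map (restrVert X a) = _
        rw [hpq, Sym2.map_pair_eq]
      rw [h1, Sym2.mk_isDiag_iff, restrVert, restrVert, dif_pos hp, dif_pos hq]
      intro h
      have : p = q := congrArg Subtype.val h
      exact hloops e.val (hpq ▸ Sym2.mk_isDiag_iff.mpr this)
    · show ¬ (s(a, b)).IsDiag
      rw [Sym2.mk_isDiag_iff]
      exact hab
  -- adjacency facts in the marked graph
  have hadj_ab : (toSimple M).Adj a b :=
    ⟨hab, Sum.inr (), rfl⟩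
  have hadj_int : ∀ (x w : V) (hx : x ∈ X) (hw : w ∈ X),
      (toSimple ends).Adj x w → (toSimple M).Adj ⟨x, hx⟩ ⟨w, hw⟩ := by
    rintro x w hx hw ⟨hne, e, he⟩
    have hall : ∀ v ∈ ends e, v ∈ X := by
      intro v hv
      rw [he] at hv
      rcases Sym2.mem_iff.mp hv with rfl | rfl
      exacts [hx, hw]
    refine ⟨fun h => hne (congrArg Subtype.val h), Sum.inl ⟨e, hall⟩, ?_⟩
    show (ends e).map (restrVert X a) = _
    rw [he, Sym2.map_pair_eq, restrVert, restrVert, dif_pos hx, dif_pos hw]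
  -- connectivity
  have hreach : ∀ (x y : V) (p : (toSimple ends).Walk x y) (hy : y ∈ X),
      (∀ hx : x ∈ X, (toSimple M).Reachable ⟨x, hx⟩ ⟨y, hy⟩) ∧
        (x ∉ X → (toSimple M).Reachable a ⟨y, hy⟩) := by
    intro x y p
    induction p with
    | nil =>
      intro hy
      exact ⟨fun hx => SimpleGraph.Reachable.refl _, fun hx => absurd hy hx⟩
    | @cons x w y h p ih =>
      intro hy
      by_cases hw : w ∈ X
      · obtain ⟨ih1, -⟩ := ih hy
        constructor
        · intro hx
          exact ((hadj_int x w hx hw h).reachable).trans (ih1 hw)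
        · intro hx
          obtain ⟨hne, e, he⟩ := h
          have he' : ends e = s(w, x) := by rw [he]; exact Sym2.eq_swap
          rcases hcross e w x he' hw hx with ⟨_, hwp, _⟩ | ⟨_, hwp, _⟩
          · have : a = (⟨w, hw⟩ : ↥X) := Subtype.ext hwp.symm
            rw [this]; exact ih1 hw
          · have hbw : b = (⟨w, hw⟩ : ↥X) := Subtype.ext hwp.symm
            exact hadj_ab.reachable.trans (hbw ▸ ih1 hw)
      · obtain ⟨-, ih2⟩ := ih hy
        have hru := ih2 hw
        constructor
        · intro hx
          obtain ⟨hne, e, he⟩ := h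
          rcases hcross e x w he hx hw with ⟨_, hxp, _⟩ | ⟨_, hxp, _⟩
          · rw [show (⟨x, hx⟩ : ↥X) = a from Subtype.ext hxp]
            exact hru
          · rw [show (⟨x, hx⟩ : ↥X) = b from Subtype.ext hxp]
            exact hadj_ab.symm.reachable.trans hru
        · exact fun _ => hru
  have hconnM : (toSimple M).Connected := by
    have hpre : (toSimple M).Preconnected := by
      rintro ⟨x, hx⟩ ⟨y, hy⟩
      obtain ⟨p⟩ := hconn.preconnected x y
      exact (hreach x y p hy).1 hx
    exact SimpleGraph.Connected.mk hpre (nonempty := ⟨a⟩)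
  -- regularity
  have hdegM : ∀ x : ↥X, deg M x = r := by
    intro x
    set φ : ({e : E // ∀ v ∈ ends e, v ∈ X} ⊕ Unit) → E := fun e' =>
      match e' with
      | Sum.inl e => e.val
      | Sum.inr _ => if (x : V) = u₁ then f else f'
      with hφ
    have hbij : Set.BijOn φ {e' | x ∈ M e'} {e | (x : V) ∈ ends e} := by
      refine ⟨?_, ?_, ?_⟩
      · rintro (e | t) hmem
        · exact (hmemInl e x).mp hmem
        · have hmem' : x = a ∨ x = b := Sym2.mem_iff.mp hmem
          show (if (x : V) = u₁ then f else f') ∈ {e | (x : V) ∈ ends e}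
          rcases hmem' with rfl | rfl
          · rw [if_pos rfl, Set.mem_setOf_eq, hf]
            exact Sym2.mem_mk_left _ _
          · rw [if_neg (fun h => huv ((congrArg Subtype.val (rfl : b = b)).symm ▸ h).symm), Set.mem_setOf_eq, hf']
            exact Sym2.mem_mk_left _ _
      · rintro (e₁ | t₁) h₁ (e₂ | t₂) h₂ heq
        · exact congrArg Sum.inl (Subtype.ext heq)
        · exfalso
          have hall := e₁.prop
          by_cases hx1 : (x : V) = u₁
          · rw [show φ (Sum.inl e₁) = e₁.val from rfl,
              show φ (Sum.inr t₂) = if (x : V) = u₁ then f else f' from rfl,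
              if_pos hx1] at heq
            exact hu₂ (hall u₂ (heq ▸ (hf ▸ Sym2.mem_mk_right u₁ u₂)))
          · rw [show φ (Sum.inl e₁) = e₁.val from rfl,
              show φ (Sum.inr t₂) = if (x : V) = u₁ then f else f' from rfl,
              if_neg hx1] at heq
            exact hv₂ (hall v₂ (heq ▸ (hf' ▸ Sym2.mem_mk_right v₁ v₂)))
        · exfalso
          have hall := e₂.prop
          by_cases hx1 : (x : V) = u₁
          · rw [show φ (Sum.inl e₂) = e₂.val from rfl,
              show φ (Sum.inr t₁) = if (x : V) = u₁ then f else f' from rfl,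
              if_pos hx1] at heq
            exact hu₂ (hall u₂ (heq ▸ (hf ▸ Sym2.mem_mk_right u₁ u₂)))
          · rw [show φ (Sum.inl e₂) = e₂.val from rfl,
              show φ (Sum.inr t₁) = if (x : V) = u₁ then f else f' from rfl,
              if_neg hx1] at heq
            exact hv₂ (hall v₂ (heq ▸ (hf' ▸ Sym2.mem_mk_right v₁ v₂)))
        · cases t₁; cases t₂; rfl
      · intro e he
        by_cases hall : ∀ v ∈ ends e, v ∈ X
        · exact ⟨Sum.inl ⟨e, hall⟩, (hmemInl ⟨e, hall⟩ x).mpr he, rfl⟩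
        · obtain ⟨q, hpq⟩ := Sym2.mem_iff_exists.mp he
          have hqX : q ∉ X := by
            push_neg at hall
            obtain ⟨w, hw, hwX⟩ := hall
            rw [hpq] at hw
            rcases Sym2.mem_iff.mp hw with rfl | rfl
            · exact absurd x.2 hwX
            · exact hwX
          rcases hcross e (x : V) q hpq x.2 hqX with ⟨hef, hx1, -⟩ | ⟨hef, hx1, -⟩
          · refine ⟨Sum.inr (), ?_, ?_⟩
            · show x ∈ s(a, b)
              rw [Sym2.mem_iff]
              exact Or.inl (Subtype.ext hx1)
            · show (if (x : V) = u₁ then f else f') = e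
              rw [if_pos hx1, hef]
          · refine ⟨Sum.inr (), ?_, ?_⟩
            · show x ∈ s(a, b)
              rw [Sym2.mem_iff]
              exact Or.inr (Subtype.ext hx1)
            · show (if (x : V) = u₁ then f else f') = e
              rw [if_neg (fun hh => huv (hh.symm.trans hx1)), hef]
    show ({e' | x ∈ M e'}).ncard = r
    calc ({e' | x ∈ M e'}).ncard
        = (φ '' {e' | x ∈ M e'}).ncard := (Set.ncard_image_of_injOn hbij.injOn).symm
      _ = ({e | (x : V) ∈ ends e}).ncard := by rw [hbij.image_eq]
      _ = r := hdeg (x : V)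
  -- odd cut condition
  have hcutM : ∀ Y : Set ↥X, Odd Y.ncard → r ≤ (Cut M Y).ncard := by
    have hmain : ∀ Y : Set ↥X, Odd Y.ncard → ¬(a ∈ Y ∧ b ∈ Y) →
        r ≤ (Cut M Y).ncard := by
      intro Y hY habY
      set Z := Subtype.val '' Y with hZ
      have hZX : Z ⊆ X := by
        rintro _ ⟨⟨z, hz⟩, -, rfl⟩
        exact hz
      have hZodd : Odd Z.ncard := by
        rw [hZ, Set.ncard_image_of_injective _ Subtype.val_injective]
        exact hY
      have hclass : ∀ e, e ∈ Cut ends Z → ¬(∀ v ∈ ends e, v ∈ X) →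
          (e = f ∧ a ∈ Y) ∨ (e = f' ∧ b ∈ Y) := by
        rintro e ⟨p, hp, q, hq, h⟩ hnall
        have hpX : p ∈ X := hZX hp
        have hqX : q ∉ X := by
          push_neg at hnall
          obtain ⟨w, hw, hwX⟩ := hnall
          rw [h] at hw
          rcases Sym2.mem_iff.mp hw with rfl | rfl
          · exact absurd hpX hwX
          · exact hwX
        obtain ⟨p', hp'Y, hp'⟩ := hp
        rcases hcross e p q h hpX hqX with ⟨rfl, h1, -⟩ | ⟨rfl, h1, -⟩
        · left
          refine ⟨rfl, ?_⟩
          have : p' = a := Subtype.ext (hp'.trans h1)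
          exact this ▸ hp'Y
        · right
          refine ⟨rfl, ?_⟩
          have : p' = b := Subtype.ext (hp'.trans h1)
          exact this ▸ hp'Y
      set ψ : E → ({e : E // ∀ v ∈ ends e, v ∈ X} ⊕ Unit) := fun e =>
        if h : ∀ v ∈ ends e, v ∈ X then Sum.inl ⟨e, h⟩ else Sum.inr () with hψ
      have hmaps : Set.MapsTo ψ (Cut ends Z) (Cut M Y) := by
        intro e he
        by_cases hall : ∀ v ∈ ends e, v ∈ X
        · show (if h : ∀ v ∈ ends e, v ∈ X then Sum.inl (⟨e, h⟩ :
              {e : E // ∀ v ∈ ends e, v ∈ X}) else Sum.inr ()) ∈ Cut M Y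
          rw [dif_pos hall]
          obtain ⟨p, hp, q, hq, h⟩ := he
          have hpX : p ∈ X := hZX hp
          have hqX : q ∈ X := hall q (h ▸ Sym2.mem_mk_right p q)
          obtain ⟨p', hp'Y, hp'⟩ := hp
          refine ⟨p', hp'Y, ⟨q, hqX⟩, ?_, ?_⟩
          · intro hqY
            exact hq ⟨⟨q, hqX⟩, hqY, rfl⟩
          · show (ends e).map (restrVert X a) = _
            rw [h, Sym2.map_pair_eq, restrVert, restrVert, dif_pos hpX, dif_pos hqX,
              show (⟨p, hpX⟩ : ↥X) = p' from Subtype.ext hp'.symm]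
        · show (if h : ∀ v ∈ ends e, v ∈ X then Sum.inl (⟨e, h⟩ :
              {e : E // ∀ v ∈ ends e, v ∈ X}) else Sum.inr ()) ∈ Cut M Y
          rw [dif_neg hall]
          rcases hclass e he hall with ⟨rfl, haY⟩ | ⟨rfl, hbY⟩
          · have hbY : b ∉ Y := fun hh => habY ⟨haY, hh⟩
            exact ⟨a, haY, b, hbY, rfl⟩
          · have haY : a ∉ Y := fun hh => habY ⟨hh, hbY⟩
            exact ⟨b, hbY, a, haY, Sym2.eq_swap⟩
      have hinj : Set.InjOn ψ (Cut ends Z) := by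
        intro e₁ h₁ e₂ h₂ heq
        by_cases hall1 : ∀ v ∈ ends e₁, v ∈ X <;>
          by_cases hall2 : ∀ v ∈ ends e₂, v ∈ X
        · rw [hψ] at heq
          simp only [dif_pos hall1, dif_pos hall2] at heq
          exact congrArg Subtype.val (Sum.inl.inj heq)
        · rw [hψ] at heq
          simp only [dif_pos hall1, dif_neg hall2] at heq
          exact absurd heq (by simp)
        · rw [hψ] at heq
          simp only [dif_neg hall1, dif_pos hall2] at heq
          exact absurd heq (by simp)
        · rcases hclass e₁ h₁ hall1 with ⟨rfl, haY⟩ | ⟨rfl, hbY⟩ <;>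
            rcases hclass e₂ h₂ hall2 with ⟨he2, haY'⟩ | ⟨he2, hbY'⟩
          · exact he2.symm
          · exact absurd ⟨haY, hbY'⟩ habY
          · exact absurd ⟨haY', hbY⟩ habY
          · exact he2.symm
      calc r ≤ (Cut ends Z).ncard := hcut Z hZodd
        _ = (ψ '' Cut ends Z).ncard := (Set.ncard_image_of_injOn hinj).symm
        _ ≤ (Cut M Y).ncard :=
            Set.ncard_le_ncard hmaps.image_subset (Set.toFinite _)
    intro Y hY
    by_cases habY : a ∈ Y ∧ b ∈ Y
    · rw [← cut_compl M Y]
      refine hmain Yᶜ ?_ (fun h => h.1 habY.1)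
      have h1 : Y.ncard + Yᶜ.ncard = Nat.card ↥X := Set.ncard_add_ncard_compl Y
      rw [Nat.card_coe_set_eq] at h1
      rw [Nat.odd_iff] at hY ⊢
      rw [Nat.even_iff] at hevenX
      omega
    · exact hmain Y hY habY
  exact ⟨hloopM, hconnM, hdegM, hcutM⟩

/-- For an `r`-graph `G` (`r ≥ 3`) with a `2`-edge-cut `C = {f, f'} = ∂(X)`,
both marked `C`-components of `G` are also `r`-graphs for the same `r`. -/
theorem stmt11 {V E : Type} [Fintype V] [Fintype E]
    (ends : E → Sym2 V) (r : ℕ) (hr : 3 ≤ r) (hG : IsRGraph r ends)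
    (X : Set V) (f f' : E) (hff : f ≠ f') (hC : Cut ends X = {f, f'})
    (u₁ u₂ v₁ v₂ : V) (hu₁ : u₁ ∈ X) (hu₂ : u₂ ∉ X) (hv₁ : v₁ ∈ X) (hv₂ : v₂ ∉ X)
    (hf : ends f = s(u₁, u₂)) (hf' : ends f' = s(v₁, v₂)) :
    IsRGraph r (markedEnds ends X ⟨u₁, hu₁⟩ ⟨v₁, hv₁⟩) ∧
      IsRGraph r (markedEnds ends Xᶜ ⟨u₂, hu₂⟩ ⟨v₂, hv₂⟩) := by
  constructor
  · exact key ends r hr hG X f f' hff hC u₁ u₂ v₁ v₂ hu₁ hu₂ hv₁ hv₂ hf hf'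
  · have hC' : Cut ends Xᶜ = {f, f'} := by rw [cut_compl]; exact hC
    exact key ends r hr hG Xᶜ f f' hff hC' u₂ u₁ v₂ v₁ hu₂ (not_not.mpr hu₁)
      hv₂ (not_not.mpr hv₁) (hf.trans Sym2.eq_swap) (hf'.trans Sym2.eq_swap)
end
end
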